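/- arXiv:1402.0473 — 3 statements merged into one kernel-verified Lean document; each statement's English description precedes it below -/
import Mathlib

section
/- Let m ∈ ℂ with Re m < 1. Define for x > 0 and η ∈ ℝ the function f(x,y) = x^{1-m}/(x² + (y-η)²)^{1-m/2}. Then f satisfies the Weinstein equation L_m f = 0 on ℍ⁺, i.e. ∂²_{xx}f + ∂²_{yy}f + (m/x)∂_x f = 0 at every point (x,y) with x > 0 and (x,y) ≠ (0,η). -/
noncomputable def pdx (u : ℝ → ℝ → ℂ) (x y : ℝ) : ℂ := deriv (fun t => u t y) x
noncomputable def pdy (u : ℝ → ℝ → ℂ) (x y : ℝ) : ℂ := deriv (fun t => u x t) y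

set_option maxHeartbeats 1000000 in
/-- For `Re m < 1`, the Poisson-type kernel `f(x,y) = x^{1-m}/(x²+(y-η)²)^{1-m/2}`
satisfies the Weinstein equation `L_m f = 0` on the right half-plane. -/
theorem poisson_kernel_solves_weinstein (m : ℂ) (hm : m.re < 1) (η : ℝ)
    (f : ℝ → ℝ → ℂ)
    (hf : ∀ x y : ℝ, f x y
      = (x : ℂ) ^ (1 - m) / (((x ^ 2 + (y - η) ^ 2 : ℝ)) : ℂ) ^ (1 - m / 2))
    (x y : ℝ) (hx : 0 < x) :
    pdx (pdx f) x y + pdy (pdy f) x y + (m / (x : ℂ)) * pdx f x y = 0 := by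
  have hX : (x : ℂ) ≠ 0 := Complex.ofReal_ne_zero.mpr hx.ne'
  set a : ℂ := 1 - m with ha
  set b : ℂ := 1 - m / 2 with hb
  have hXslit : (x : ℂ) ∈ Complex.slitPlane := Complex.ofReal_mem_slitPlane.mpr hx
  have hcastx : ∀ t : ℝ, ((t : ℂ) ^ 2 + ((y : ℂ) - (η : ℂ)) ^ 2)
      = ((t ^ 2 + (y - η) ^ 2 : ℝ) : ℂ) := by intro t; push_cast; ring
  have hslitx : ∀ t : ℝ, 0 < t →
      ((t : ℂ) ^ 2 + ((y : ℂ) - (η : ℂ)) ^ 2) ∈ Complex.slitPlane := by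
    intro t ht
    rw [hcastx t]
    exact Complex.ofReal_mem_slitPlane.mpr (by positivity)
  have hcasty : ∀ t : ℝ, ((x : ℂ) ^ 2 + ((t : ℂ) - (η : ℂ)) ^ 2)
      = ((x ^ 2 + (t - η) ^ 2 : ℝ) : ℂ) := by intro t; push_cast; ring
  have hslity : ∀ t : ℝ,
      ((x : ℂ) ^ 2 + ((t : ℂ) - (η : ℂ)) ^ 2) ∈ Complex.slitPlane := by
    intro t
    rw [hcasty t]
    exact Complex.ofReal_mem_slitPlane.mpr (by positivity)
  -- the x-section of f as a complex function
  have hfx : (fun s : ℝ => f s y)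
      = fun s : ℝ => (s : ℂ) ^ a * ((s : ℂ) ^ 2 + ((y : ℂ) - (η : ℂ)) ^ 2) ^ (-b) := by
    funext s
    rw [hf, ← hcastx s, Complex.cpow_neg, div_eq_mul_inv]
  have hfy : (fun s : ℝ => f x s)
      = fun s : ℝ => (x : ℂ) ^ a * ((x : ℂ) ^ 2 + ((s : ℂ) - (η : ℂ)) ^ 2) ^ (-b) := by
    funext s
    rw [hf, ← hcasty s, Complex.cpow_neg, div_eq_mul_inv]
  -- first x-derivative
  have hDx : ∀ t : ℝ, 0 < t → HasDerivAt (fun s : ℝ => f s y)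
      (a * (t : ℂ) ^ (a - 1) * ((t : ℂ) ^ 2 + ((y : ℂ) - (η : ℂ)) ^ 2) ^ (-b)
        + (t : ℂ) ^ a
          * (-b * ((t : ℂ) ^ 2 + ((y : ℂ) - (η : ℂ)) ^ 2) ^ (-b - 1) * (2 * (t : ℂ)))) t := by
    intro t ht
    rw [hfx]
    have hXt : ((t : ℂ)) ∈ Complex.slitPlane := Complex.ofReal_mem_slitPlane.mpr ht
    have g1 := (Complex.hasStrictDerivAt_cpow_const (c := a) hXt).hasDerivAt
    have g2 := ((hasDerivAt_pow 2 ((t : ℂ))).add_const (((y : ℂ) - (η : ℂ)) ^ 2)).cpow_const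
      (c := -b) (hslitx t ht)
    have h := (g1.mul g2).comp_ofReal
    convert h using 1
    · rfl
    try simp only [id_eq]
    push_cast
    ring
  have hpdx : ∀ t : ℝ, 0 < t → pdx f t y
      = a * (t : ℂ) ^ (a - 1) * ((t : ℂ) ^ 2 + ((y : ℂ) - (η : ℂ)) ^ 2) ^ (-b)
        + (t : ℂ) ^ a
          * (-b * ((t : ℂ) ^ 2 + ((y : ℂ) - (η : ℂ)) ^ 2) ^ (-b - 1) * (2 * (t : ℂ))) := by
    intro t ht
    simp only [pdx]
    exact (hDx t ht).deriv
  -- second x-derivative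
  have hD2c : HasDerivAt (fun u : ℂ =>
      a * u ^ (a - 1) * (u ^ 2 + ((y : ℂ) - (η : ℂ)) ^ 2) ^ (-b)
        + u ^ a * (-b * (u ^ 2 + ((y : ℂ) - (η : ℂ)) ^ 2) ^ (-b - 1) * (2 * u)))
      (a * (a - 1) * (x : ℂ) ^ (a - 1 - 1)
          * ((x : ℂ) ^ 2 + ((y : ℂ) - (η : ℂ)) ^ 2) ^ (-b)
        - 4 * a * b * (x : ℂ) ^ (a - 1)
          * ((x : ℂ) ^ 2 + ((y : ℂ) - (η : ℂ)) ^ 2) ^ (-b - 1) * (x : ℂ)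
        + 4 * b * (b + 1) * (x : ℂ) ^ a
          * ((x : ℂ) ^ 2 + ((y : ℂ) - (η : ℂ)) ^ 2) ^ (-b - 1 - 1) * (x : ℂ) ^ 2
        - 2 * b * (x : ℂ) ^ a
          * ((x : ℂ) ^ 2 + ((y : ℂ) - (η : ℂ)) ^ 2) ^ (-b - 1)) ((x : ℂ)) := by
    have g1 := ((Complex.hasStrictDerivAt_cpow_const (c := a - 1) hXslit).hasDerivAt).const_mul a
    have g2 := ((hasDerivAt_pow 2 ((x : ℂ))).add_const (((y : ℂ) - (η : ℂ)) ^ 2)).cpow_const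
      (c := -b) (hslitx x hx)
    have g3 := (Complex.hasStrictDerivAt_cpow_const (c := a) hXslit).hasDerivAt
    have g4 := (((hasDerivAt_pow 2 ((x : ℂ))).add_const (((y : ℂ) - (η : ℂ)) ^ 2)).cpow_const
      (c := -b - 1) (hslitx x hx)).const_mul (-b)
    have g5 : HasDerivAt (fun u : ℂ => 2 * u) 2 ((x : ℂ)) := by
      simpa using (hasDerivAt_id ((x : ℂ))).const_mul (2 : ℂ)
    convert (g1.mul g2).add (g3.mul (g4.mul g5)) using 1
    · rfl
    · rfl
    · rfl
    simp only [Pi.mul_apply]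
    push_cast
    ring
  have hA : pdx (pdx f) x y
      = a * (a - 1) * (x : ℂ) ^ (a - 1 - 1)
          * ((x : ℂ) ^ 2 + ((y : ℂ) - (η : ℂ)) ^ 2) ^ (-b)
        - 4 * a * b * (x : ℂ) ^ (a - 1)
          * ((x : ℂ) ^ 2 + ((y : ℂ) - (η : ℂ)) ^ 2) ^ (-b - 1) * (x : ℂ)
        + 4 * b * (b + 1) * (x : ℂ) ^ a
          * ((x : ℂ) ^ 2 + ((y : ℂ) - (η : ℂ)) ^ 2) ^ (-b - 1 - 1) * (x : ℂ) ^ 2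
        - 2 * b * (x : ℂ) ^ a
          * ((x : ℂ) ^ 2 + ((y : ℂ) - (η : ℂ)) ^ 2) ^ (-b - 1) := by
    simp only [pdx]
    have hev : (fun t : ℝ => deriv (fun s => f s y) t) =ᶠ[nhds x]
        (fun t : ℝ =>
          a * (t : ℂ) ^ (a - 1) * ((t : ℂ) ^ 2 + ((y : ℂ) - (η : ℂ)) ^ 2) ^ (-b)
          + (t : ℂ) ^ a
            * (-b * ((t : ℂ) ^ 2 + ((y : ℂ) - (η : ℂ)) ^ 2) ^ (-b - 1) * (2 * (t : ℂ)))) := by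
      filter_upwards [eventually_gt_nhds hx] with t ht using (hDx t ht).deriv
    exact hev.deriv_eq.trans hD2c.comp_ofReal.deriv
  -- first y-derivative
  have hEy : ∀ t : ℝ, HasDerivAt (fun s : ℝ => f x s)
      ((x : ℂ) ^ a
        * (-b * ((x : ℂ) ^ 2 + ((t : ℂ) - (η : ℂ)) ^ 2) ^ (-b - 1)
          * (2 * ((t : ℂ) - (η : ℂ))))) t := by
    intro t
    rw [hfy]
    have q := ((((hasDerivAt_id ((t : ℂ))).sub_const ((η : ℂ))).pow 2).const_add
        ((x : ℂ) ^ 2)).cpow_const (c := -b) (hslity t)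
    have h := (q.const_mul ((x : ℂ) ^ a)).comp_ofReal
    convert h using 1
    · rfl
    try simp only [id_eq]
    simp only [Pi.pow_apply]
    push_cast
    ring
  have hpdyfun : (fun t : ℝ => deriv (fun s : ℝ => f x s) t)
      = fun t : ℝ => (x : ℂ) ^ a
        * (-b * ((x : ℂ) ^ 2 + ((t : ℂ) - (η : ℂ)) ^ 2) ^ (-b - 1)
          * (2 * ((t : ℂ) - (η : ℂ)))) := by
    funext t
    exact (hEy t).deriv
  -- second y-derivative
  have hE2c : HasDerivAt (fun u : ℂ => (x : ℂ) ^ a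
      * (-b * ((x : ℂ) ^ 2 + (u - (η : ℂ)) ^ 2) ^ (-b - 1) * (2 * (u - (η : ℂ)))))
      (4 * b * (b + 1) * (x : ℂ) ^ a
          * ((x : ℂ) ^ 2 + ((y : ℂ) - (η : ℂ)) ^ 2) ^ (-b - 1 - 1)
          * ((y : ℂ) - (η : ℂ)) ^ 2
        - 2 * b * (x : ℂ) ^ a
          * ((x : ℂ) ^ 2 + ((y : ℂ) - (η : ℂ)) ^ 2) ^ (-b - 1)) ((y : ℂ)) := by
    have r4 := ((((((hasDerivAt_id ((y : ℂ))).sub_const ((η : ℂ))).pow 2).const_add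
        ((x : ℂ) ^ 2)).cpow_const (c := -b - 1) (hslity y))).const_mul (-b)
    have rL : HasDerivAt (fun u : ℂ => 2 * (u - (η : ℂ))) 2 ((y : ℂ)) := by
      simpa using ((hasDerivAt_id ((y : ℂ))).sub_const ((η : ℂ))).const_mul (2 : ℂ)
    convert ((r4.mul rL).const_mul ((x : ℂ) ^ a)) using 1
    · rfl
    · rfl
    · rfl
    simp only [Pi.pow_apply, id_eq]
    push_cast
    ring
  have hB : pdy (pdy f) x y
      = 4 * b * (b + 1) * (x : ℂ) ^ a
          * ((x : ℂ) ^ 2 + ((y : ℂ) - (η : ℂ)) ^ 2) ^ (-b - 1 - 1)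
          * ((y : ℂ) - (η : ℂ)) ^ 2
        - 2 * b * (x : ℂ) ^ a
          * ((x : ℂ) ^ 2 + ((y : ℂ) - (η : ℂ)) ^ 2) ^ (-b - 1) := by
    simp only [pdy]
    rw [hpdyfun]
    exact hE2c.comp_ofReal.deriv
  -- assemble
  have hS0 : ((x : ℂ) ^ 2 + ((y : ℂ) - (η : ℂ)) ^ 2) ≠ 0 := by
    rw [hcastx x]
    exact Complex.ofReal_ne_zero.mpr (by positivity)
  have hPa : (x : ℂ) ^ a = (x : ℂ) ^ (a - 1) * (x : ℂ) := by
    conv_lhs => rw [show a = a - 1 + 1 by ring]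
    rw [Complex.cpow_add _ _ hX, Complex.cpow_one]
  have hP1 : (x : ℂ) ^ (a - 1) = (x : ℂ) ^ (a - 1 - 1) * (x : ℂ) := by
    conv_lhs => rw [show a - 1 = a - 1 - 1 + 1 by ring]
    rw [Complex.cpow_add _ _ hX, Complex.cpow_one]
  have hQ0 : ((x : ℂ) ^ 2 + ((y : ℂ) - (η : ℂ)) ^ 2) ^ (-b)
      = ((x : ℂ) ^ 2 + ((y : ℂ) - (η : ℂ)) ^ 2) ^ (-b - 1)
        * ((x : ℂ) ^ 2 + ((y : ℂ) - (η : ℂ)) ^ 2) := by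
    conv_lhs => rw [show -b = -b - 1 + 1 by ring]
    rw [Complex.cpow_add _ _ hS0, Complex.cpow_one]
  have hQ1 : ((x : ℂ) ^ 2 + ((y : ℂ) - (η : ℂ)) ^ 2) ^ (-b - 1)
      = ((x : ℂ) ^ 2 + ((y : ℂ) - (η : ℂ)) ^ 2) ^ (-b - 1 - 1)
        * ((x : ℂ) ^ 2 + ((y : ℂ) - (η : ℂ)) ^ 2) := by
    conv_lhs => rw [show -b - 1 = -b - 1 - 1 + 1 by ring]
    rw [Complex.cpow_add _ _ hS0, Complex.cpow_one]
  have hC2 := hpdx x hx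
  have hfrac : m / (x : ℂ)
      * (a * (x : ℂ) ^ (a - 1) * ((x : ℂ) ^ 2 + ((y : ℂ) - (η : ℂ)) ^ 2) ^ (-b)
        + (x : ℂ) ^ a
          * (-b * ((x : ℂ) ^ 2 + ((y : ℂ) - (η : ℂ)) ^ 2) ^ (-b - 1) * (2 * (x : ℂ))))
      = m * a * (x : ℂ) ^ (a - 1 - 1) * ((x : ℂ) ^ 2 + ((y : ℂ) - (η : ℂ)) ^ 2) ^ (-b)
        - 2 * m * b * (x : ℂ) ^ (a - 1)
          * ((x : ℂ) ^ 2 + ((y : ℂ) - (η : ℂ)) ^ 2) ^ (-b - 1) * (x : ℂ) := by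
    rw [hPa, hP1, div_mul_eq_mul_div, div_eq_iff hX]
    ring
  rw [hA, hB, hC2, hfrac, hPa, hP1, hQ0, hQ1, ha, hb]
  ring
end

section
/- Let m ∈ ℂ, Re m < 1, and let u : ℝ → ℝ be continuous and bounded. Define U(x,y) = C_m x^{1-m} ∫_{-∞}^{∞} u(η)/(x²+(y-η)²)^{1-m/2} dη with C_m = ((1-m)/(2π)) ∫₀^π sin^{1-m}θ dθ. Then for every y₀ ∈ ℝ, U(x,y) → u(y₀) as (x,y) → (0,y₀) with x > 0. -/
open Real Filter

open MeasureTheory Set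

lemma sq_cpow {r : ℝ} (hr : 0 < r) (z : ℂ) :
    ((r ^ 2 : ℝ) : ℂ) ^ z = (r : ℂ) ^ (2 * z) := by
  have hlog : Complex.log (r : ℂ) = (Real.log r : ℂ) := (Complex.ofReal_log hr.le).symm
  have h1 : ((r ^ 2 : ℝ) : ℂ) = (r : ℂ) ^ (2 : ℂ) := by
    push_cast
    rw [show (2:ℂ) = ((2:ℕ):ℂ) by norm_num, Complex.cpow_natCast]
  rw [h1, ← Complex.cpow_mul]
  · rw [hlog]; simp [Real.pi_pos]
  · rw [hlog]; simp [Real.pi_pos.le]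

lemma arg_ne_pi {r : ℝ} (hr : 0 < r) : (r : ℂ).arg ≠ Real.pi := by
  rw [Complex.arg_ofReal_of_nonneg hr.le]
  exact Real.pi_ne_zero.symm

section sinlemma

variable (s : ℂ)

noncomputable def sinPow : ℝ → ℂ := fun θ => ((Real.sin θ : ℂ)) ^ s

noncomputable def betaFn : ℝ → ℂ :=
  fun x => (2:ℂ) ^ s * ((x:ℂ) ^ ((s-1)/2) * (((1-x : ℝ)):ℂ) ^ ((s-1)/2))

lemma cosmap_deriv : ∀ θ ∈ Ioo (0:ℝ) π,
    HasDerivWithinAt (fun θ : ℝ => (1 - Real.cos θ)/2) (Real.sin θ / 2) (Ioo 0 π) θ := by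
  intro θ _
  have := ((Real.hasDerivAt_cos θ).const_sub 1).div_const 2
  simpa using this.hasDerivWithinAt

lemma cosmap_inj : InjOn (fun θ : ℝ => (1 - Real.cos θ)/2) (Ioo 0 π) := by
  intro a ha b hb hab
  have : Real.cos a = Real.cos b := by
    field_simp at hab; linarith
  exact Real.injOn_cos ⟨ha.1.le, ha.2.le⟩ ⟨hb.1.le, hb.2.le⟩ this

lemma cosmap_image : (fun θ : ℝ => (1 - Real.cos θ)/2) '' (Ioo 0 π) = Ioo 0 1 := by
  ext x
  constructor
  · rintro ⟨θ, hθ, rfl⟩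
    have h1 : Real.cos θ < Real.cos 0 :=
      Real.strictAntiOn_cos ⟨le_refl 0, Real.pi_pos.le⟩ ⟨hθ.1.le, hθ.2.le⟩ hθ.1
    have h2 : Real.cos π < Real.cos θ :=
      Real.strictAntiOn_cos ⟨hθ.1.le, hθ.2.le⟩ ⟨Real.pi_pos.le, le_refl π⟩ hθ.2
    rw [Real.cos_zero] at h1
    rw [Real.cos_pi] at h2
    constructor <;> [linarith; linarith]
  · rintro ⟨hx0, hx1⟩
    refine ⟨Real.arccos (1 - 2*x), ⟨?_, ?_⟩, ?_⟩
    · exact Real.arccos_pos.mpr (by linarith)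
    · refine lt_of_le_of_ne (Real.arccos_le_pi _) ?_
      intro h
      have := Real.arccos_eq_pi.mp h
      linarith
    · show (1 - Real.cos (Real.arccos (1 - 2*x)))/2 = x
      rw [Real.cos_arccos (by linarith) (by linarith)]
      ring

lemma sin_pos_of_mem {θ : ℝ} (hθ : θ ∈ Ioo (0:ℝ) π) : 0 < Real.sin θ :=
  Real.sin_pos_of_pos_of_lt_pi hθ.1 hθ.2

lemma cosmap_pointwise : ∀ θ ∈ Ioo (0:ℝ) π,
    |Real.sin θ / 2| • betaFn s ((1 - Real.cos θ)/2) = sinPow s θ := by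
  intro θ hθ
  have hs : 0 < Real.sin θ := sin_pos_of_mem hθ
  have hx : (0:ℝ) < (1 - Real.cos θ)/2 := by
    have h1 : Real.cos θ < Real.cos 0 :=
      Real.strictAntiOn_cos ⟨le_refl 0, Real.pi_pos.le⟩ ⟨hθ.1.le, hθ.2.le⟩ hθ.1
    rw [Real.cos_zero] at h1; linarith
  have hx1 : (0:ℝ) < 1 - (1 - Real.cos θ)/2 := by
    have h2 : Real.cos π < Real.cos θ :=
      Real.strictAntiOn_cos ⟨hθ.1.le, hθ.2.le⟩ ⟨Real.pi_pos.le, le_refl π⟩ hθ.2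
    rw [Real.cos_pi] at h2; linarith
  have key : ((1 - Real.cos θ)/2 : ℝ) * (1 - (1 - Real.cos θ)/2) = (Real.sin θ / 2)^2 := by
    have := Real.sin_sq_add_cos_sq θ
    nlinarith [this]
  unfold betaFn sinPow
  rw [← Complex.mul_cpow_ofReal_nonneg hx.le hx1.le]
  rw [show ((((1 - Real.cos θ)/2 : ℝ) : ℂ) * ((1 - (1 - Real.cos θ)/2 : ℝ) : ℂ))
      = (((((1 - Real.cos θ)/2) * (1 - (1 - Real.cos θ)/2) : ℝ)) : ℂ) by push_cast; ring]
  rw [key, sq_cpow (by positivity) ((s-1)/2)]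
  rw [show (2 : ℂ) * ((s-1)/2) = s - 1 by ring]
  have habs : |Real.sin θ / 2| = Real.sin θ / 2 := abs_of_pos (by positivity)
  rw [habs]
  have hne : ((Real.sin θ / 2 : ℝ) : ℂ) ≠ 0 := by
    exact_mod_cast (by positivity : (Real.sin θ / 2 : ℝ) ≠ 0)
  have hsm : ((Real.sin θ / 2 : ℝ)) • ((2:ℂ) ^ s * ((Real.sin θ / 2 : ℝ) : ℂ) ^ (s - 1))
      = (2:ℂ) ^ s * (((Real.sin θ / 2 : ℝ) : ℂ) ^ (1:ℂ) * ((Real.sin θ / 2 : ℝ) : ℂ) ^ (s - 1)) := by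
    rw [Complex.cpow_one, Complex.real_smul]; ring
  rw [hsm, ← Complex.cpow_add _ _ hne]
  rw [show (1 : ℂ) + (s - 1) = s by ring]
  have hhalf : ((Real.sin θ / 2 : ℝ) : ℂ) = ((Real.sin θ : ℝ) : ℂ) * (((2:ℝ)⁻¹ : ℝ) : ℂ) := by
    push_cast; ring
  rw [show ((Real.sin θ / 2 : ℝ) : ℂ) = ((Real.sin θ : ℝ) : ℂ) * (((2:ℝ)⁻¹ : ℝ) : ℂ) by push_cast; ring]
  rw [Complex.mul_cpow_ofReal_nonneg hs.le (by norm_num)]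
  rw [show (((2:ℝ)⁻¹ : ℝ) : ℂ) = ((2:ℝ) : ℂ)⁻¹ by push_cast; ring]
  rw [Complex.inv_cpow _ _ (arg_ne_pi (by norm_num))]
  have h2ne : ((2:ℝ) : ℂ) ^ s ≠ 0 := by
    intro h
    have := Complex.cpow_eq_zero_iff ((2:ℝ):ℂ) s
    rw [h] at this
    simp at this
  push_cast
  field_simp
end sinlemma

section sinint

lemma betaFn_integrableOn {s : ℂ} (hs : 0 < ((s+1)/2).re) :
    IntegrableOn (betaFn s) (Ioo (0:ℝ) 1) := by
  have h := Complex.betaIntegral_convergent hs hs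
  have h1 : IntegrableOn (fun x : ℝ =>
      (x:ℂ) ^ ((s+1)/2 - 1) * ((1-x : ℝ):ℂ) ^ ((s+1)/2 - 1)) (Set.Ioc (0:ℝ) 1) := by
    have := h.1
    simpa using this
  have h2 : IntegrableOn (fun x : ℝ =>
      (x:ℂ) ^ ((s+1)/2 - 1) * ((1-x : ℝ):ℂ) ^ ((s+1)/2 - 1)) (Set.Ioo (0:ℝ) 1) :=
    h1.mono_set Set.Ioo_subset_Ioc_self
  have h3 := h2.const_mul ((2:ℂ) ^ s)
  apply IntegrableOn.congr_fun h3 ?_ measurableSet_Ioo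
  intro x _
  show _ = betaFn s x
  unfold betaFn
  rw [show (s+1)/2 - 1 = (s-1)/2 by ring]

lemma sinPow_integrableOn {s : ℂ} (hs : 0 < ((s+1)/2).re) :
    IntegrableOn (sinPow s) (Ioo (0:ℝ) π) := by
  have hiff := integrableOn_image_iff_integrableOn_abs_deriv_smul
    measurableSet_Ioo (cosmap_deriv) (cosmap_inj) (betaFn s)
  rw [cosmap_image] at hiff
  have h := hiff.mp (betaFn_integrableOn hs)
  have h2 : IntegrableOn (fun θ : ℝ => |Real.sin θ / 2| • betaFn s ((1 - Real.cos θ)/2))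
      (Ioo (0:ℝ) π) := h
  exact h2.congr_fun (fun θ hθ => (cosmap_pointwise s θ hθ).symm ▸ rfl) measurableSet_Ioo

lemma sinPow_integral {s : ℂ} (hs : 0 < ((s+1)/2).re) :
    ∫ θ in Ioo (0:ℝ) π, sinPow s θ
      = (2:ℂ) ^ s * Complex.betaIntegral ((s+1)/2) ((s+1)/2) := by
  have himg := integral_image_eq_integral_abs_deriv_smul
    measurableSet_Ioo (cosmap_deriv) (cosmap_inj) (betaFn s)
  rw [cosmap_image] at himg
  have h1 : ∫ θ in Ioo (0:ℝ) π, sinPow s θ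
      = ∫ θ in Ioo (0:ℝ) π, |Real.sin θ / 2| • betaFn s ((1 - Real.cos θ)/2) := by
    apply setIntegral_congr_fun measurableSet_Ioo
    intro θ hθ
    exact (cosmap_pointwise s θ hθ).symm
  rw [h1, ← himg]
  have h2 : ∫ x in Ioo (0:ℝ) 1, betaFn s x
      = (2:ℂ) ^ s * ∫ x in Ioo (0:ℝ) 1,
          (x:ℂ) ^ ((s+1)/2 - 1) * ((1-x : ℝ):ℂ) ^ ((s+1)/2 - 1) := by
    rw [← integral_const_mul]
    apply setIntegral_congr_fun measurableSet_Ioo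
    intro x _
    unfold betaFn
    rw [show (s+1)/2 - 1 = (s-1)/2 by ring]
  rw [h2]
  congr 1
  rw [Complex.betaIntegral, intervalIntegral.integral_of_le (by norm_num : (0:ℝ) ≤ 1),
    ← integral_Ioc_eq_integral_Ioo]
  apply setIntegral_congr_fun measurableSet_Ioc
  intro x _
  push_cast
  ring

end sinint

section cotsubst

noncomputable def cotFn : ℝ → ℝ := fun θ => Real.cos θ / Real.sin θ

noncomputable def cotD : ℝ → ℝ := fun θ => (-Real.sin θ * Real.sin θ - Real.cos θ * Real.cos θ) / (Real.sin θ)^2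

lemma cotD_eq {θ : ℝ} (hθ : θ ∈ Ioo (0:ℝ) π) : cotD θ = -((Real.sin θ)^2)⁻¹ := by
  have hs : 0 < Real.sin θ := sin_pos_of_mem hθ
  have h := Real.sin_sq_add_cos_sq θ
  unfold cotD
  field_simp
  nlinarith

lemma cot_hasDeriv : ∀ θ ∈ Ioo (0:ℝ) π,
    HasDerivWithinAt cotFn (cotD θ) (Ioo 0 π) θ := by
  intro θ hθ
  have hs : Real.sin θ ≠ 0 := (sin_pos_of_mem hθ).ne'
  exact ((Real.hasDerivAt_cos θ).div (Real.hasDerivAt_sin θ) hs).hasDerivWithinAt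

lemma cot_inj : InjOn cotFn (Ioo 0 π) := by
  have h : StrictAntiOn cotFn (Ioo 0 π) := by
    apply strictAntiOn_of_deriv_neg (convex_Ioo 0 π)
    · apply ContinuousOn.div Real.continuous_cos.continuousOn Real.continuous_sin.continuousOn
      intro θ hθ
      exact (sin_pos_of_mem hθ).ne'
    · intro θ hθ
      rw [interior_Ioo] at hθ
      have hs : Real.sin θ ≠ 0 := (sin_pos_of_mem hθ).ne'
      have hd : deriv cotFn θ = cotD θ :=
        ((Real.hasDerivAt_cos θ).div (Real.hasDerivAt_sin θ) hs).deriv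
      rw [hd, cotD_eq hθ]
      have h0 : 0 < Real.sin θ := sin_pos_of_mem hθ
      have h1 : (0:ℝ) < ((Real.sin θ)^2)⁻¹ := by positivity
      linarith
  exact h.injOn

lemma cot_image : cotFn '' (Ioo 0 π) = Set.univ := by
  apply Set.eq_univ_of_forall
  intro t
  refine ⟨π/2 - Real.arctan t, ⟨?_, ?_⟩, ?_⟩
  · have := Real.arctan_lt_pi_div_two t
    linarith
  · have := Real.neg_pi_div_two_lt_arctan t
    linarith
  · unfold cotFn
    rw [Real.cos_pi_div_two_sub, Real.sin_pi_div_two_sub]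
    rw [← Real.tan_eq_sin_div_cos, Real.tan_arctan]

lemma cot_pointwise (z : ℂ) : ∀ θ ∈ Ioo (0:ℝ) π,
    |cotD θ| • ((1 + (cotFn θ)^2 : ℝ) : ℂ) ^ z = (Real.sin θ : ℂ) ^ (-(2*z) - 2) := by
  intro θ hθ
  have hs : 0 < Real.sin θ := sin_pos_of_mem hθ
  have h1 : (1 + (cotFn θ)^2 : ℝ) = ((Real.sin θ)⁻¹)^2 := by
    have h := Real.sin_sq_add_cos_sq θ
    unfold cotFn
    field_simp
    exact h
  rw [h1, sq_cpow (by positivity) z]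
  have h2 : ((((Real.sin θ)⁻¹ : ℝ)) : ℂ) = ((Real.sin θ : ℝ) : ℂ)⁻¹ := by push_cast; ring
  rw [h2, Complex.inv_cpow _ _ (arg_ne_pi hs), ← Complex.cpow_neg]
  have habs : |cotD θ| = ((Real.sin θ)^2)⁻¹ := by
    rw [cotD_eq hθ, abs_neg, abs_inv, abs_of_pos (by positivity)]
  rw [habs]
  have hne : ((Real.sin θ : ℝ) : ℂ) ≠ 0 := by exact_mod_cast hs.ne'
  have h3 : ((((Real.sin θ)^2)⁻¹ : ℝ)) • ((Real.sin θ : ℝ) : ℂ) ^ (-(2*z))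
      = ((Real.sin θ : ℝ) : ℂ) ^ (-(2:ℂ)) * ((Real.sin θ : ℝ) : ℂ) ^ (-(2*z)) := by
    rw [Complex.real_smul]
    congr 1
    rw [Complex.cpow_neg]
    rw [show ((2:ℂ)) = ((2:ℕ):ℂ) by norm_num, Complex.cpow_natCast]
    push_cast
    ring
  rw [h3, ← Complex.cpow_add _ _ hne]
  congr 1
  ring

lemma cot_integral (z : ℂ) :
    (∫ t : ℝ, ((1 + t^2 : ℝ) : ℂ) ^ z)
      = ∫ θ in Ioo (0:ℝ) π, (Real.sin θ : ℂ) ^ (-(2*z) - 2) := by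
  have himg := integral_image_eq_integral_abs_deriv_smul
    measurableSet_Ioo cot_hasDeriv cot_inj (fun t : ℝ => ((1 + t^2 : ℝ) : ℂ) ^ z)
  rw [cot_image] at himg
  rw [← setIntegral_univ (μ := volume) (f := fun t : ℝ => ((1 + t^2 : ℝ) : ℂ) ^ z), himg]
  exact setIntegral_congr_fun measurableSet_Ioo (cot_pointwise z)

lemma cot_integrable {z : ℂ} (h : IntegrableOn (fun θ : ℝ => (Real.sin θ : ℂ) ^ (-(2*z) - 2)) (Ioo (0:ℝ) π)) :
    Integrable (fun t : ℝ => ((1 + t^2 : ℝ) : ℂ) ^ z) := by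
  have hiff := integrableOn_image_iff_integrableOn_abs_deriv_smul
    measurableSet_Ioo cot_hasDeriv cot_inj (fun t : ℝ => ((1 + t^2 : ℝ) : ℂ) ^ z)
  rw [cot_image, integrableOn_univ] at hiff
  apply hiff.mpr
  have h2 : IntegrableOn (fun θ : ℝ => |cotD θ| • ((1 + (cotFn θ)^2 : ℝ) : ℂ) ^ z)
      (Ioo (0:ℝ) π) :=
    h.congr_fun (fun θ hθ => (cot_pointwise z θ hθ).symm ▸ rfl) measurableSet_Ioo
  exact h2

end cotsubst

section normalization

lemma cpow_two_ne_zero (s : ℂ) : (2:ℂ) ^ s ≠ 0 :=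
  fun h => by simpa using (Complex.cpow_eq_zero_iff (2:ℂ) s).mp h

lemma normalization {m : ℂ} (hm : m.re < 1) {C : ℂ}
    (hC : C = ((1 - m) / (2 * (Real.pi : ℂ))) *
      ∫ θ in (0:ℝ)..Real.pi, (Real.sin θ : ℂ) ^ (1 - m)) :
    C * (∫ t : ℝ, ((1 + t^2 : ℝ) : ℂ) ^ (m/2 - 1)) = 1 := by
  have hs1 : 0 < (((1-m)+1)/2).re := by
    simp only [Complex.div_ofNat_re, Complex.add_re, Complex.sub_re, Complex.one_re]
    linarith
  have hs2 : 0 < (((-m)+1)/2).re := by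
    simp only [Complex.div_ofNat_re, Complex.add_re, Complex.neg_re, Complex.one_re]
    linarith
  -- the θ-integral in hC
  have hint1 : (∫ θ in (0:ℝ)..Real.pi, (Real.sin θ : ℂ) ^ (1 - m))
      = (2:ℂ) ^ (1-m) * Complex.betaIntegral (((1-m)+1)/2) (((1-m)+1)/2) := by
    rw [intervalIntegral.integral_of_le Real.pi_pos.le, integral_Ioc_eq_integral_Ioo,
      ← sinPow_integral hs1]
    rfl
  -- the t-integral
  have hint2 : (∫ t : ℝ, ((1 + t^2 : ℝ) : ℂ) ^ (m/2 - 1))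
      = (2:ℂ) ^ (-m) * Complex.betaIntegral (((-m)+1)/2) (((-m)+1)/2) := by
    rw [cot_integral, show -(2*(m/2-1)) - 2 = -m by ring, ← sinPow_integral hs2]
    rfl
  set w₁ : ℂ := ((1-m)+1)/2 with hw₁
  set w₂ : ℂ := ((-m)+1)/2 with hw₂
  set B₁ := Complex.betaIntegral w₁ w₁ with hB₁
  set B₂ := Complex.betaIntegral w₂ w₂ with hB₂
  have hrw1 : 0 < w₁.re := hs1
  have hrw2 : 0 < w₂.re := hs2
  have E1 : Complex.Gamma w₁ * Complex.Gamma w₁ = Complex.Gamma (w₁ + w₁) * B₁ :=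
    Complex.Gamma_mul_Gamma_eq_betaIntegral hrw1 hrw1
  have E2 : Complex.Gamma w₂ * Complex.Gamma w₂ = Complex.Gamma (w₂ + w₂) * B₂ :=
    Complex.Gamma_mul_Gamma_eq_betaIntegral hrw2 hrw2
  have hw11 : w₁ + w₁ = 2 - m := by rw [hw₁]; ring
  have hw22 : w₂ + w₂ = 1 - m := by rw [hw₂]; ring
  rw [hw11] at E1
  rw [hw22] at E2
  have E3 : Complex.Gamma w₂ * Complex.Gamma w₁
      = Complex.Gamma (1 - m) * (2:ℂ) ^ m * (Real.sqrt Real.pi : ℂ) := by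
    have := Complex.Gamma_mul_Gamma_add_half w₂
    rw [show w₂ + 1/2 = w₁ by rw [hw₁, hw₂]; ring,
      show (2:ℂ) * w₂ = 1 - m by rw [hw₂]; ring,
      show (1:ℂ) - (1 - m) = m by ring] at this
    exact this
  have hπ : (Real.pi : ℂ) ≠ 0 := by exact_mod_cast Real.pi_ne_zero
  have h1m : (1:ℂ) - m ≠ 0 := by
    intro h
    have := congrArg Complex.re h
    simp [Complex.sub_re] at this
    linarith
  have hG1 : Complex.Gamma (1-m) ≠ 0 :=
    Complex.Gamma_ne_zero_of_re_pos (by simp [Complex.sub_re]; linarith)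
  have E4 : Complex.Gamma (2-m) = (1-m) * Complex.Gamma (1-m) := by
    rw [show (2:ℂ) - m = (1-m) + 1 by ring, Complex.Gamma_add_one _ h1m]
  have hG2 : Complex.Gamma (2-m) ≠ 0 := by
    rw [E4]; exact mul_ne_zero h1m hG1
  have hQ1P : (2:ℂ)^(1-m) * (2:ℂ)^m = 2 := by
    rw [← Complex.cpow_add _ _ two_ne_zero]
    norm_num
  have hQ2P : (2:ℂ)^(-m) * (2:ℂ)^m = 1 := by
    rw [← Complex.cpow_add _ _ two_ne_zero]
    simp
  have hS : ((Real.sqrt Real.pi : ℝ):ℂ)^2 = (Real.pi:ℂ) := by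
    rw [← Complex.ofReal_pow, Real.sq_sqrt Real.pi_pos.le]
  have hB1 : B₁ = Complex.Gamma w₁ * Complex.Gamma w₁ / Complex.Gamma (2-m) := by
    field_simp
    linear_combination -E1
  have hB2 : B₂ = Complex.Gamma w₂ * Complex.Gamma w₂ / Complex.Gamma (1-m) := by
    field_simp
    linear_combination -E2
  have hBB : B₁ * B₂ = (2:ℂ)^m * (2:ℂ)^m * (Real.pi:ℂ) / (1-m) := by
    rw [hB1, hB2, E4]
    have hg : (Complex.Gamma w₁ * Complex.Gamma w₁) * (Complex.Gamma w₂ * Complex.Gamma w₂)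
        = (Complex.Gamma (1-m))^2 * ((2:ℂ)^m)^2 * (Real.pi:ℂ) := by
      have : (Complex.Gamma w₁ * Complex.Gamma w₁) * (Complex.Gamma w₂ * Complex.Gamma w₂)
          = (Complex.Gamma w₂ * Complex.Gamma w₁)^2 := by ring
      rw [this, E3, ← hS]
      ring
    field_simp
    linear_combination hg
  rw [hC, hint1, hint2]
  have hpow : (2:ℂ)^(1-m) * (2:ℂ)^(-m) * ((2:ℂ)^m)^2 = 2 := by
    linear_combination (2:ℂ)^(-m) * (2:ℂ)^m * hQ1P + 2 * hQ2P
  have expand : ((1 - m) / (2 * (Real.pi:ℂ)) * ((2:ℂ)^(1-m) * B₁)) * ((2:ℂ)^(-m) * B₂)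
      = (1-m) * (((2:ℂ)^(1-m) * (2:ℂ)^(-m)) * (B₁ * B₂)) / (2 * (Real.pi:ℂ)) := by ring
  rw [expand, hBB]
  field_simp
  linear_combination hpow

end normalization

section main

lemma g_integrable {m : ℂ} (hm : m.re < 1) :
    Integrable (fun t : ℝ => ((1 + t^2 : ℝ) : ℂ) ^ (m/2 - 1)) := by
  apply cot_integrable
  have hs : 0 < ((-m+1)/2).re := by
    simp only [Complex.div_ofNat_re, Complex.add_re, Complex.neg_re, Complex.one_re]
    linarith
  have h : IntegrableOn (sinPow (-m)) (Ioo (0:ℝ) π) := sinPow_integrableOn hs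
  have he : -(2*(m/2-1)) - 2 = -m := by ring
  rw [he]
  exact h

lemma g_continuous (m : ℂ) : Continuous (fun t : ℝ => ((1 + t^2 : ℝ) : ℂ) ^ (m/2 - 1)) := by
  apply Continuous.cpow
  · exact Complex.continuous_ofReal.comp (by continuity)
  · exact continuous_const
  · intro t
    rw [Complex.mem_slitPlane_iff]
    left
    simp only [Complex.ofReal_re]
    positivity

lemma U_subst (m : ℂ) (u : ℝ → ℝ) {x : ℝ} (hx : 0 < x) (y : ℝ) :
    (x:ℂ)^(1-m) * (∫ η : ℝ, (u η : ℂ) / (((x ^ 2 + (y - η) ^ 2 : ℝ)) : ℂ) ^ (1 - m / 2))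
      = ∫ t : ℝ, (u (y - x*t) : ℂ) * ((1 + t^2 : ℝ):ℂ)^(m/2 - 1) := by
  have hxne : (x:ℂ) ≠ 0 := by exact_mod_cast hx.ne'
  set F : ℝ → ℂ := fun η => (u η : ℂ) * ((x^2 + (y-η)^2 : ℝ) : ℂ)^(m/2 - 1) with hF
  have step1 : (∫ η : ℝ, (u η : ℂ) / (((x ^ 2 + (y - η) ^ 2 : ℝ)) : ℂ) ^ (1 - m / 2))
      = ∫ η : ℝ, F η := by
    congr 1
    ext η
    simp only [hF]
    have hb : (0:ℝ) < x^2 + (y-η)^2 := by positivity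
    have hbne : (((x^2 + (y-η)^2 : ℝ)) : ℂ) ≠ 0 := by exact_mod_cast hb.ne'
    rw [show m/2 - 1 = -(1 - m/2) by ring, Complex.cpow_neg, div_eq_mul_inv]
  have step2 : (∫ η : ℝ, F η) = ∫ η : ℝ, F (y - η) :=
    (integral_sub_left_eq_self F volume y).symm
  have step3 : (∫ η : ℝ, F (y - η)) = |x| • ∫ t : ℝ, F (y - x*t) := by
    have := MeasureTheory.Measure.integral_comp_mul_left (fun η' : ℝ => F (y - η')) x
    rw [this]
    rw [smul_smul]
    rw [abs_inv, mul_inv_cancel₀ (by positivity), one_smul]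
  have step4 : ∀ t : ℝ, F (y - x*t)
      = (x:ℂ)^(m - 2) * ((u (y - x*t) : ℂ) * ((1 + t^2 : ℝ):ℂ)^(m/2 - 1)) := by
    intro t
    simp only [hF]
    have h1 : (x^2 + (y - (y - x*t))^2 : ℝ) = x^2 * (1 + t^2) := by ring
    rw [h1]
    rw [show ((x^2 * (1 + t^2) : ℝ) : ℂ) = ((x^2 : ℝ) : ℂ) * ((1 + t^2 : ℝ) : ℂ) by push_cast; ring]
    rw [Complex.mul_cpow_ofReal_nonneg (by positivity) (by positivity)]
    rw [sq_cpow hx (m/2 - 1), show (2:ℂ) * (m/2 - 1) = m - 2 by ring]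
    ring
  rw [step1, step2, step3]
  rw [show (∫ t : ℝ, F (y - x*t))
      = (x:ℂ)^(m-2) * ∫ t : ℝ, (u (y - x*t) : ℂ) * ((1 + t^2 : ℝ):ℂ)^(m/2 - 1) by
    rw [← integral_const_mul]; congr 1; ext t; exact step4 t]
  rw [abs_of_pos hx, Complex.real_smul]
  rw [show (x:ℂ)^(1-m) * ((x:ℂ) * ((x:ℂ)^(m-2) * ∫ t : ℝ, (u (y - x*t) : ℂ) * ((1 + t^2 : ℝ):ℂ)^(m/2 - 1)))
      = ((x:ℂ)^(1-m) * ((x:ℂ)^((1:ℂ)) * (x:ℂ)^(m-2))) * ∫ t : ℝ, (u (y - x*t) : ℂ) * ((1 + t^2 : ℝ):ℂ)^(m/2 - 1) by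
    rw [Complex.cpow_one]; ring]
  rw [← Complex.cpow_add _ _ hxne, ← Complex.cpow_add _ _ hxne,
    show (1 - m) + ((1:ℂ) + (m - 2)) = 0 by ring, Complex.cpow_zero, one_mul]

end main

/-- Poisson formula for axisymmetric potentials: boundary values. For `Re m < 1` and `u : ℝ → ℝ`
continuous and bounded, the function
`U(x,y) = C_m x^{1-m} ∫_ℝ u(η)/(x²+(y-η)²)^{1-m/2} dη` tends to `u(y₀)` as
`(x,y) → (0,y₀)` with `x > 0`. -/
theorem poisson_boundary_values (m : ℂ) (hm : m.re < 1) (u : ℝ → ℝ)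
    (hu : Continuous u) (hub : ∃ M : ℝ, ∀ y : ℝ, |u y| ≤ M)
    (C : ℂ)
    (hC : C = ((1 - m) / (2 * (Real.pi : ℂ))) *
      ∫ θ in (0:ℝ)..Real.pi, (Real.sin θ : ℂ) ^ (1 - m))
    (U : ℝ → ℝ → ℂ)
    (hU : ∀ x y : ℝ, U x y
      = C * (x : ℂ) ^ (1 - m) *
          ∫ η : ℝ, (u η : ℂ) / (((x ^ 2 + (y - η) ^ 2 : ℝ)) : ℂ) ^ (1 - m / 2))
    (y₀ : ℝ) :
    Tendsto (fun p : ℝ × ℝ => U p.1 p.2)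
      (nhdsWithin (0, y₀) {p : ℝ × ℝ | 0 < p.1}) (nhds (u y₀ : ℂ)) := by
  obtain ⟨M, hM⟩ := hub
  set g : ℝ → ℂ := fun t => ((1 + t^2 : ℝ):ℂ)^(m/2-1) with hg
  have hgint : Integrable g := g_integrable hm
  have hnorm : C * ∫ t : ℝ, g t = 1 := normalization hm hC
  set l := nhdsWithin ((0:ℝ), y₀) {p : ℝ × ℝ | 0 < p.1} with hl
  set Fam : ℝ × ℝ → ℝ → ℂ := fun p t => C * (u (p.2 - p.1*t) : ℂ) * g t with hFam
  have hcont : ∀ p : ℝ × ℝ, Continuous (Fam p) := by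
    intro p
    apply Continuous.mul
    · apply Continuous.mul continuous_const
      exact Complex.continuous_ofReal.comp (hu.comp (by continuity))
    · exact g_continuous m
  have key : Tendsto (fun p : ℝ × ℝ => ∫ t : ℝ, Fam p t) l
      (nhds (∫ t : ℝ, C * (u y₀ : ℂ) * g t)) := by
    apply MeasureTheory.tendsto_integral_filter_of_dominated_convergence
      (bound := fun t => ‖C‖ * M * ‖g t‖)
    · exact Eventually.of_forall fun p => (hcont p).aestronglyMeasurable
    · apply Eventually.of_forall
      intro p
      apply Eventually.of_forall
      intro t
      simp only [hFam, norm_mul]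
      gcongr
      rw [Complex.norm_real, Real.norm_eq_abs]
      exact hM _
    · exact (hgint.norm.const_mul _)
    · apply Eventually.of_forall
      intro t
      have hco : Continuous (fun p : ℝ × ℝ => Fam p t) := by
        apply Continuous.mul
        · apply Continuous.mul continuous_const
          exact Complex.continuous_ofReal.comp (hu.comp (by continuity))
        · exact continuous_const
      have := (hco.tendsto ((0:ℝ), y₀)).mono_left (nhdsWithin_le_nhds (s := {p : ℝ × ℝ | 0 < p.1}))
      simpa [hFam] using this
  have hval : (∫ t : ℝ, C * (u y₀ : ℂ) * g t) = (u y₀ : ℂ) := by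
    rw [integral_const_mul, mul_comm C ((u y₀ : ℂ)), mul_assoc, hnorm, mul_one]
  rw [hval] at key
  apply key.congr'
  filter_upwards [self_mem_nhdsWithin] with p hp
  have hx : 0 < p.1 := hp
  rw [hU p.1 p.2, mul_assoc, U_subst m u hx p.2, ← integral_const_mul]
  congr 1
  ext t
  simp only [hFam, hg]
  ring
end

section
/- Let m ∈ ℂ, α > 0, and let u be a C² solution of L_m u = 0 (Δu + (m/x)∂_x u = 0) on an open subset of ℍ⁺. In bipolar coordinates x = α sinh τ/(cosh τ - cos θ), y = α sin θ/(cosh τ - cos θ), define v_m(τ,θ) = sinh^{(m-1)/2}τ · (cosh τ - cos θ)^{-m/2} · u(τ,θ). Then v_m satisfies ∂²v_m/∂τ² + ∂²v_m/∂θ² + coth τ · ∂v_m/∂τ + (1/4 - (m-1)²/(4 sinh²τ)) v_m = 0. -/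
noncomputable def UF (u : ℝ → ℝ → ℂ) : ℝ × ℝ → ℂ := fun p => u p.1 p.2
noncomputable def pxf (u : ℝ → ℝ → ℂ) (p : ℝ × ℝ) : ℂ := fderiv ℝ (UF u) p (1, 0)
noncomputable def pyf (u : ℝ → ℝ → ℂ) (p : ℝ × ℝ) : ℂ := fderiv ℝ (UF u) p (0, 1)
noncomputable def phi (α t s : ℝ) : ℝ × ℝ :=
  (α * Real.sinh t / (Real.cosh t - Real.cos s), α * Real.sin s / (Real.cosh t - Real.cos s))

lemma wbt_dpos {t : ℝ} (s : ℝ) (ht : 0 < t) : 0 < Real.cosh t - Real.cos s := by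
  have h1 := Real.cos_le_one s
  have h2 : 1 < Real.cosh t := Real.one_lt_cosh.2 (ne_of_gt ht)
  linarith

lemma wbt_slice1 {f : ℝ × ℝ → ℂ} {L : ℝ × ℝ →L[ℝ] ℂ} {p : ℝ × ℝ} (h : HasFDerivAt f L p) :
    HasDerivAt (fun t => f (t, p.2)) (L (1, 0)) p.1 := by
  have h1 : HasDerivAt (fun t : ℝ => ((t, p.2) : ℝ × ℝ)) ((1 : ℝ), (0 : ℝ)) p.1 :=
    (hasDerivAt_id p.1).prodMk (hasDerivAt_const p.1 p.2)
  exact h.comp_hasDerivAt p.1 h1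

lemma wbt_slice2 {f : ℝ × ℝ → ℂ} {L : ℝ × ℝ →L[ℝ] ℂ} {p : ℝ × ℝ} (h : HasFDerivAt f L p) :
    HasDerivAt (fun s => f (p.1, s)) (L (0, 1)) p.2 := by
  have h1 : HasDerivAt (fun s : ℝ => ((p.1, s) : ℝ × ℝ)) ((0 : ℝ), (1 : ℝ)) p.2 :=
    (hasDerivAt_const p.2 p.1).prodMk (hasDerivAt_id p.2)
  exact h.comp_hasDerivAt p.2 h1

lemma wbt_clm (L : ℝ × ℝ →L[ℝ] ℂ) (x y : ℝ) :
    L (x, y) = (x : ℂ) * L (1, 0) + (y : ℂ) * L (0, 1) := by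
  have h : ((x, y) : ℝ × ℝ) = x • ((1 : ℝ), (0 : ℝ)) + y • ((0 : ℝ), (1 : ℝ)) := by
    simp [Prod.ext_iff]
  rw [h, map_add, map_smul, map_smul, Complex.real_smul, Complex.real_smul]

lemma wbt_chain {g : ℝ × ℝ → ℂ} {p : ℝ × ℝ} (hg : DifferentiableAt ℝ g p)
    {f1 f2 : ℝ → ℝ} {d1 d2 : ℝ} {t : ℝ} (h1 : HasDerivAt f1 d1 t) (h2 : HasDerivAt f2 d2 t)
    (hp : p = (f1 t, f2 t)) :
    HasDerivAt (fun t' => g (f1 t', f2 t'))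
      ((d1 : ℂ) * fderiv ℝ g p (1, 0) + (d2 : ℂ) * fderiv ℝ g p (0, 1)) t := by
  subst hp
  have h := hg.hasFDerivAt.comp_hasDerivAt t (h1.prodMk h2)
  rwa [wbt_clm] at h


lemma wbt_cpow {f : ℝ → ℝ} {f' : ℝ} {t : ℝ} (c : ℂ) (hf : HasDerivAt f f' t) (h0 : 0 < f t) :
    HasDerivAt (fun t' => ((f t' : ℝ) : ℂ) ^ c) (c * ((f t : ℝ) : ℂ) ^ (c - 1) * ((f' : ℝ) : ℂ)) t := by
  have hg : HasDerivAt (fun y : ℝ => ((y : ℝ) : ℂ) ^ c) (c * ((f t : ℝ) : ℂ) ^ (c - 1)) (f t) :=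
    (Complex.hasStrictDerivAt_cpow_const (Complex.ofReal_mem_slitPlane.2 h0)).hasDerivAt.comp_ofReal
  have h := hg.scomp t hf
  rw [Complex.real_smul] at h
  rw [mul_comm]
  exact h

lemma wbt_LXt (α t s : ℝ) (hd : Real.cosh t - Real.cos s ≠ 0) :
    HasDerivAt (fun t' => α * Real.sinh t' / (Real.cosh t' - Real.cos s))
      (α * (1 - Real.cosh t * Real.cos s) / (Real.cosh t - Real.cos s) ^ 2) t := by
  have h0 := ((Real.hasDerivAt_sinh t).const_mul α).div
    ((Real.hasDerivAt_cosh t).sub_const (Real.cos s)) hd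
  have he : α * (1 - Real.cosh t * Real.cos s) / (Real.cosh t - Real.cos s) ^ 2
      = (α * Real.cosh t * (Real.cosh t - Real.cos s) - α * Real.sinh t * Real.sinh t) /
        (Real.cosh t - Real.cos s) ^ 2 := by
    rw [div_eq_div_iff (pow_ne_zero 2 hd) (pow_ne_zero 2 hd)]
    linear_combination (-α * (Real.cosh t - Real.cos s) ^ 2) * Real.cosh_sq_sub_sinh_sq t
  rw [he]; exact h0

lemma wbt_LYt (α t s : ℝ) (hd : Real.cosh t - Real.cos s ≠ 0) :
    HasDerivAt (fun t' => α * Real.sin s / (Real.cosh t' - Real.cos s))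
      (-(α * Real.sinh t * Real.sin s) / (Real.cosh t - Real.cos s) ^ 2) t := by
  have h0 := (hasDerivAt_const t (α * Real.sin s)).div
    ((Real.hasDerivAt_cosh t).sub_const (Real.cos s)) hd
  have he : -(α * Real.sinh t * Real.sin s) / (Real.cosh t - Real.cos s) ^ 2
      = (0 * (Real.cosh t - Real.cos s) - α * Real.sin s * Real.sinh t) /
        (Real.cosh t - Real.cos s) ^ 2 := by
    rw [div_eq_div_iff (pow_ne_zero 2 hd) (pow_ne_zero 2 hd)]; ring
  rw [he]; exact h0

lemma wbt_LXs (α t s : ℝ) (hd : Real.cosh t - Real.cos s ≠ 0) :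
    HasDerivAt (fun s' => α * Real.sinh t / (Real.cosh t - Real.cos s'))
      (-(α * Real.sinh t * Real.sin s) / (Real.cosh t - Real.cos s) ^ 2) s := by
  have h0 := (hasDerivAt_const s (α * Real.sinh t)).div
    ((Real.hasDerivAt_cos s).const_sub (Real.cosh t)) hd
  have he : -(α * Real.sinh t * Real.sin s) / (Real.cosh t - Real.cos s) ^ 2
      = (0 * (Real.cosh t - Real.cos s) - α * Real.sinh t * - -Real.sin s) /
        (Real.cosh t - Real.cos s) ^ 2 := by
    rw [div_eq_div_iff (pow_ne_zero 2 hd) (pow_ne_zero 2 hd)]; ring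
  rw [he]; exact h0

lemma wbt_LYs (α t s : ℝ) (hd : Real.cosh t - Real.cos s ≠ 0) :
    HasDerivAt (fun s' => α * Real.sin s' / (Real.cosh t - Real.cos s'))
      (α * (Real.cosh t * Real.cos s - 1) / (Real.cosh t - Real.cos s) ^ 2) s := by
  have h0 := ((Real.hasDerivAt_sin s).const_mul α).div
    ((Real.hasDerivAt_cos s).const_sub (Real.cosh t)) hd
  have he : α * (Real.cosh t * Real.cos s - 1) / (Real.cosh t - Real.cos s) ^ 2
      = (α * Real.cos s * (Real.cosh t - Real.cos s) - α * Real.sin s * - -Real.sin s) /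
        (Real.cosh t - Real.cos s) ^ 2 := by
    rw [div_eq_div_iff (pow_ne_zero 2 hd) (pow_ne_zero 2 hd)]
    linear_combination (α * (Real.cosh t - Real.cos s) ^ 2) * Real.sin_sq_add_cos_sq s
  rw [he]; exact h0

lemma wbt_LXtt (α t s : ℝ) (hd : Real.cosh t - Real.cos s ≠ 0) :
    HasDerivAt (fun t' => α * (1 - Real.cosh t' * Real.cos s) / (Real.cosh t' - Real.cos s) ^ 2)
      (α * Real.sinh t * (-(Real.cos s * (Real.cosh t - Real.cos s)) -
        2 * (1 - Real.cosh t * Real.cos s)) / (Real.cosh t - Real.cos s) ^ 3) t := by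
  have h0 := ((((Real.hasDerivAt_cosh t).mul_const (Real.cos s)).const_sub 1).const_mul α).div
    (((Real.hasDerivAt_cosh t).sub_const (Real.cos s)).pow 2) (pow_ne_zero 2 hd)
  have he : α * Real.sinh t * (-(Real.cos s * (Real.cosh t - Real.cos s)) -
        2 * (1 - Real.cosh t * Real.cos s)) / (Real.cosh t - Real.cos s) ^ 3
      = (α * -(Real.sinh t * Real.cos s) * (Real.cosh t - Real.cos s) ^ 2 -
          α * (1 - Real.cosh t * Real.cos s) *
            ((2 : ℕ) * (Real.cosh t - Real.cos s) ^ (2 - 1) * Real.sinh t)) /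
        ((Real.cosh t - Real.cos s) ^ 2) ^ 2 := by
    rw [div_eq_div_iff (pow_ne_zero 3 hd) (pow_ne_zero 2 (pow_ne_zero 2 hd))]; push_cast; ring
  rw [he]; exact h0

lemma wbt_LYtt (α t s : ℝ) (hd : Real.cosh t - Real.cos s ≠ 0) :
    HasDerivAt (fun t' => -(α * Real.sinh t' * Real.sin s) / (Real.cosh t' - Real.cos s) ^ 2)
      (-(α * Real.sin s * (Real.cosh t * (Real.cosh t - Real.cos s) - 2 * Real.sinh t ^ 2)) /
        (Real.cosh t - Real.cos s) ^ 3) t := by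
  have h0 := ((((Real.hasDerivAt_sinh t).const_mul α).mul_const (Real.sin s)).neg).div
    (((Real.hasDerivAt_cosh t).sub_const (Real.cos s)).pow 2) (pow_ne_zero 2 hd)
  have he : -(α * Real.sin s * (Real.cosh t * (Real.cosh t - Real.cos s) - 2 * Real.sinh t ^ 2)) /
        (Real.cosh t - Real.cos s) ^ 3
      = (-(α * Real.cosh t * Real.sin s) * (Real.cosh t - Real.cos s) ^ 2 -
          -(α * Real.sinh t * Real.sin s) *
            ((2 : ℕ) * (Real.cosh t - Real.cos s) ^ (2 - 1) * Real.sinh t)) /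
        ((Real.cosh t - Real.cos s) ^ 2) ^ 2 := by
    rw [div_eq_div_iff (pow_ne_zero 3 hd) (pow_ne_zero 2 (pow_ne_zero 2 hd))]; push_cast; ring
  rw [he]; exact h0

lemma wbt_LXhh (α t s : ℝ) (hd : Real.cosh t - Real.cos s ≠ 0) :
    HasDerivAt (fun s' => -(α * Real.sinh t * Real.sin s') / (Real.cosh t - Real.cos s') ^ 2)
      (-(α * Real.sinh t * (Real.cos s * (Real.cosh t - Real.cos s) - 2 * Real.sin s ^ 2)) /
        (Real.cosh t - Real.cos s) ^ 3) s := by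
  have h0 := (((Real.hasDerivAt_sin s).const_mul (α * Real.sinh t)).neg).div
    (((Real.hasDerivAt_cos s).const_sub (Real.cosh t)).pow 2) (pow_ne_zero 2 hd)
  have he : -(α * Real.sinh t * (Real.cos s * (Real.cosh t - Real.cos s) - 2 * Real.sin s ^ 2)) /
        (Real.cosh t - Real.cos s) ^ 3
      = (-(α * Real.sinh t * Real.cos s) * (Real.cosh t - Real.cos s) ^ 2 -
          -(α * Real.sinh t * Real.sin s) *
            ((2 : ℕ) * (Real.cosh t - Real.cos s) ^ (2 - 1) * - -Real.sin s)) /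
        ((Real.cosh t - Real.cos s) ^ 2) ^ 2 := by
    rw [div_eq_div_iff (pow_ne_zero 3 hd) (pow_ne_zero 2 (pow_ne_zero 2 hd))]; push_cast; ring
  rw [he]; exact h0

lemma wbt_LYhh (α t s : ℝ) (hd : Real.cosh t - Real.cos s ≠ 0) :
    HasDerivAt (fun s' => α * (Real.cosh t * Real.cos s' - 1) / (Real.cosh t - Real.cos s') ^ 2)
      (α * Real.sin s * (-(Real.cosh t * (Real.cosh t - Real.cos s)) -
        2 * (Real.cosh t * Real.cos s - 1)) / (Real.cosh t - Real.cos s) ^ 3) s := by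
  have h0 := ((((Real.hasDerivAt_cos s).const_mul (Real.cosh t)).sub_const 1).const_mul α).div
    (((Real.hasDerivAt_cos s).const_sub (Real.cosh t)).pow 2) (pow_ne_zero 2 hd)
  have he : α * Real.sin s * (-(Real.cosh t * (Real.cosh t - Real.cos s)) -
        2 * (Real.cosh t * Real.cos s - 1)) / (Real.cosh t - Real.cos s) ^ 3
      = (α * (Real.cosh t * -Real.sin s) * (Real.cosh t - Real.cos s) ^ 2 -
          α * (Real.cosh t * Real.cos s - 1) *
            ((2 : ℕ) * (Real.cosh t - Real.cos s) ^ (2 - 1) * - -Real.sin s)) /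
        ((Real.cosh t - Real.cos s) ^ 2) ^ 2 := by
    rw [div_eq_div_iff (pow_ne_zero 3 hd) (pow_ne_zero 2 (pow_ne_zero 2 hd))]; push_cast; ring
  rw [he]; exact h0

theorem wbt_key (m al sh ch cs sn Dv u0 ux uy a b c d A A1 A2 B B1 B2
    Xt Yt Xh Yh Xtt Ytt Xhh Yhh : ℂ)
    (hsh : sh ≠ 0) (hDv : Dv ≠ 0) (hal : al ≠ 0)
    (hD : Dv = ch - cs)
    (hch : ch ^ 2 = sh ^ 2 + 1) (hsn : sn ^ 2 + cs ^ 2 = 1)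
    (hA1 : A1 = A / sh) (hA2 : A2 = A / sh ^ 2) (hB1 : B1 = B / Dv) (hB2 : B2 = B / Dv ^ 2)
    (hXt : Xt = al * (1 - ch * cs) / Dv ^ 2) (hYt : Yt = -(al * sh * sn) / Dv ^ 2)
    (hXh : Xh = -(al * sh * sn) / Dv ^ 2) (hYh : Yh = al * (ch * cs - 1) / Dv ^ 2)
    (hXtt : Xtt = al * sh * (-(cs * Dv) - 2 * (1 - ch * cs)) / Dv ^ 3)
    (hYtt : Ytt = -(al * sn * (ch * Dv - 2 * sh ^ 2)) / Dv ^ 3)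
    (hXhh : Xhh = -(al * sh * (cs * Dv - 2 * sn ^ 2)) / Dv ^ 3)
    (hYhh : Yhh = al * sn * (-(ch * Dv) - 2 * (ch * cs - 1)) / Dv ^ 3)
    (hsol : a + d + m * Dv / (al * sh) * ux = 0) :
    (((((((((((((m - 1) / 2) * (((m - 1) / 2 - 1) * (A2) * (ch)))) * (ch) + (((m - 1) / 2) * (A1)) * (sh))) * (B) + ((((m - 1) / 2) * (A1)) * (ch)) * ((-(m / 2)) * (B1) * (sh)))) + (((((m - 1) / 2) * (A1) * (ch)) * (((-(m / 2)) * (B1)) * (sh)) + (A) * (((((-(m / 2)) * ((-(m / 2) - 1) * (B2) * (sh)))) * (sh) + ((-(m / 2)) * (B1)) * (ch))))))) * (u0) + (((((((m - 1) / 2) * (A1)) * (ch)) * (B)) + ((A) * (((-(m / 2)) * (B1)) * (sh))))) * ((Xt) * (ux) + (Yt) * (uy)))) + (((((((m - 1) / 2) * (A1) * (ch)) * (B) + (A) * ((-(m / 2)) * (B1) * (sh)))) * ((((Xt) * (ux)) + ((Yt) * (uy)))) + ((A) * (B)) * (((((Xtt) * (ux) + (Xt) * ((Xt) * (a) + (Yt)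 * (b)))) + (((Ytt) * (uy) + (Yt) * ((Xt) * (c) + (Yt) * (d))))))))) + ((((((((0) * (B) + (0) * ((-(m / 2)) * (B1) * (sn)))) + (((A) * (((((-(m / 2)) * ((-(m / 2) - 1) * (B2) * (sn)))) * (sn) + ((-(m / 2)) * (B1)) * (cs))))))) * (u0) + ((((0) * (B)) + ((A) * (((-(m / 2)) * (B1)) * (sn))))) * ((Xh) * (ux) + (Yh) * (uy)))) + (((((A) * ((-(m / 2)) * (B1) * (sn)))) * ((((Xh) * (ux)) + ((Yh) * (uy)))) + ((A) * (B)) * (((((Xhh) * (ux) + (Xh) * ((Xh) * (a) + (Yh) * (b)))) + (((Yhh) * (uy) + (Yh) * ((Xh) * (c) + (Yh) * (d))))))))) + ch / sh * (((((((m - 1) / 2) * (A1) * (ch)) * (B) + (A) * ((-(m / 2)) * (B1) * (sh)))) * (u0) + ((A) * (B)) * ((Xt) * (ux) + (Yt) * (uy)))) +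
      (1 / 4 - (m - 1) ^ 2 / (4 * sh ^ 2)) * (A * B * u0) = 0 := by
  have hshi : sh * sh⁻¹ = 1 := mul_inv_cancel₀ hsh
  have hDi : Dv * Dv⁻¹ = 1 := mul_inv_cancel₀ hDv
  have hali : al * al⁻¹ = 1 := mul_inv_cancel₀ hal
  linear_combination ((1 : ℂ) * c * A * B * Yt + (1 : ℂ) * b * A * B * Yt + (1 : ℂ) * a * A * B * Xt + (-1 : ℂ) * ch * ux * A1 * B + (1 : ℂ) * sh⁻¹ * ch * ux * A * B + (1 : ℂ) * al * Dv⁻¹^2 * a * A * B + (-1 : ℂ) * al * ch * cs * Dv⁻¹^2 * a * A * B + (1 : ℂ) * m * ch * ux * A1 * B + (-1 : ℂ) * m * sh * ux * A * B1) * hXt +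
      ((1 : ℂ) * d * A * B * Yt + (-1 : ℂ) * ch * uy * A1 * B + (1 : ℂ) * sh⁻¹ * ch * uy * A * B + (1 : ℂ) * al * Dv⁻¹^2 * c * A * B + (1 : ℂ) * al * Dv⁻¹^2 * b * A * B + (-1 : ℂ) * al * ch * cs * Dv⁻¹^2 * c * A * B + (-1 : ℂ) * al * ch * cs * Dv⁻¹^2 * b * A * B + (-1 : ℂ) * al * sh * sn * Dv⁻¹^2 * d * A * B + (1 : ℂ) * m * ch * uy * A1 * B + (-1 : ℂ) * m * sh * uy * A * B1) * hYt +
      ((1 : ℂ) * c * A * B * Yh + (1 : ℂ) * b * A * B * Yh + (1 : ℂ) * a * A * B * Xh + (-1 : ℂ) * al * sh * sn * Dv⁻¹^2 * a * A * B + (-1 : ℂ) * m * sn * ux * A * B1) * hXh +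
      ((1 : ℂ) * d * A * B * Yh + (-1 : ℂ) * al * Dv⁻¹^2 * d * A * B + (1 : ℂ) * al * ch * cs * Dv⁻¹^2 * d * A * B + (-1 : ℂ) * al * sh * sn * Dv⁻¹^2 * c * A * B + (-1 : ℂ) * al * sh * sn * Dv⁻¹^2 * b * A * B + (-1 : ℂ) * m * sn * uy * A * B1) * hYh +
      ((1 : ℂ) * ux * A * B) * hXtt +
      ((1 : ℂ) * uy * A * B) * hYtt +
      ((1 : ℂ) * ux * A * B) * hXhh +
      ((1 : ℂ) * uy * A * B) * hYhh +
      (((-1 : ℂ)/2) * sh⁻¹ * ch^2 * u0 * B + ((-1 : ℂ)/2) * sh * u0 * B + (-1 : ℂ) * al * ch * Dv⁻¹^2 * ux * B + (1 : ℂ) * al * ch^2 * cs * Dv⁻¹^2 * ux * B + (1 : ℂ) * al * sh * ch * sn * Dv⁻¹^2 * uy * B + ((1 : ℂ)/2) * m * sh⁻¹ * ch^2 * u0 * B + ((1 : ℂ)/2) * m * sh * u0 * B + ((1 : ℂ)/2) * m * sh * ch * u0 * B1 + (1 : ℂ) * m * al * ch * Dv⁻¹^2 * ux * B + (-1 : ℂ)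 * m * al * ch^2 * cs * Dv⁻¹^2 * ux * B + (-1 : ℂ) * m * al * sh * ch * sn * Dv⁻¹^2 * uy * B + ((-1 : ℂ)/2) * m^2 * sh * ch * u0 * B1) * hA1 +
      (((3 : ℂ)/4) * ch^2 * u0 * B + (-1 : ℂ) * m * ch^2 * u0 * B + ((1 : ℂ)/4) * m^2 * ch^2 * u0 * B) * hA2 +
      (((-1 : ℂ)/2) * m * cs * u0 * A + ((-1 : ℂ)/2) * m * ch * u0 * A + (1 : ℂ) * m * al * sn * Dv⁻¹^2 * uy * A + (-1 : ℂ) * m * al * ch * cs * sn * Dv⁻¹^2 * uy * A + (-1 : ℂ) * m * al * sh * Dv⁻¹^2 * ux * A + (1 : ℂ) * m * al * sh * sn^2 * Dv⁻¹^2 * ux * A + (1 : ℂ) * m * al * sh * ch * cs * Dv⁻¹^2 * ux * A + (1 : ℂ) * m * al * sh^2 * sn * Dv⁻¹^2 * uy * A + ((-1 : ℂ)/2) * m^2 * sh * sh⁻¹ * ch * u0 * A) * hB1 +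
      (((1 : ℂ)/2) * m * sn^2 * u0 * A + ((1 : ℂ)/2) * m * sh^2 * u0 * A + ((1 : ℂ)/4) * m^2 * sn^2 * u0 * A + ((1 : ℂ)/4) * m^2 * sh^2 * u0 * A) * hB2 +
      ((1 : ℂ) * al^2 * Dv⁻¹^4 * A * B + (-2 : ℂ) * al^2 * ch * cs * Dv⁻¹^4 * A * B + (1 : ℂ) * al^2 * ch^2 * cs^2 * Dv⁻¹^4 * A * B + (1 : ℂ) * al^2 * sh^2 * sn^2 * Dv⁻¹^4 * A * B) * hsol +
      ((2 : ℂ) * al * sh * Dv⁻¹^3 * ux * A * B + ((1 : ℂ)/2) * m * Dv⁻¹^2 * u0 * A * B + (1 : ℂ) * m * al * sh * Dv⁻¹^3 * ux * A * B + (-1 : ℂ) * m * al^2 * al⁻¹ * sh^2 * sh⁻¹ * Dv * Dv⁻¹^4 * ux * A * B + ((1 : ℂ)/4) * m^2 * Dv⁻¹^2 * u0 * A * B) * hsn +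
      ((-2 : ℂ) * al * ch * sn * Dv⁻¹^3 * uy * A * B + (-2 : ℂ) * al * sh * cs * Dv⁻¹^3 * ux * A * B + ((-1 : ℂ)/2) * m * Dv⁻¹ * u0 * A * B + ((1 : ℂ)/2) * m * Dv * Dv⁻¹^2 * u0 * A * B + ((-1 : ℂ)/2) * m * cs * Dv⁻¹^2 * u0 * A * B + ((-1 : ℂ)/2) * m * ch * Dv⁻¹^2 * u0 * A * B + (-1 : ℂ) * m * al * ch * sn * Dv⁻¹^3 * uy * A * B + (-1 : ℂ) * m * al * sh⁻¹ * ch^2 * Dv⁻¹^2 * ux * A * B + (1 : ℂ) * m * al * sh * Dv * Dv⁻¹^3 * ux * A * B + (-1 : ℂ) * m * al * sh * cs * Dv⁻¹^3 * ux * A * B + (2 : ℂ) * m * al^2 * al⁻¹ * sh⁻¹ * ch * Dv * Dv⁻¹^4 * ux * A * B + (1 : ℂ) * m * al^2 * al⁻¹ * sh⁻¹ * ch^2 * Dv^2 * Dv⁻¹^4 * ux * A * B + (-1 : ℂ) * m * al^2 * al⁻¹ * sh⁻¹ * ch^2 * cs * Dv * Dv⁻¹^4 * ux * A * B + (-1 :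 ℂ) * m * al^2 * al⁻¹ * sh⁻¹ * ch^3 * Dv * Dv⁻¹^4 * ux * A * B + (-1 : ℂ) * m * al^2 * al⁻¹ * sh^2 * sh⁻¹ * Dv^2 * Dv⁻¹^4 * ux * A * B + (1 : ℂ) * m * al^2 * al⁻¹ * sh^2 * sh⁻¹ * cs * Dv * Dv⁻¹^4 * ux * A * B + (1 : ℂ) * m * al^2 * al⁻¹ * sh^2 * sh⁻¹ * ch * Dv * Dv⁻¹^4 * ux * A * B + ((1 : ℂ)/4) * m^2 * Dv * Dv⁻¹^2 * u0 * A * B + ((-1 : ℂ)/4) * m^2 * cs * Dv⁻¹^2 * u0 * A * B + ((-1 : ℂ)/4) * m^2 * ch * Dv⁻¹^2 * u0 * A * B) * hD +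
      (((1 : ℂ)/4) * sh⁻¹^2 * u0 * A * B + (-2 : ℂ) * al * sn * Dv⁻¹^3 * uy * A * B + ((-1 : ℂ)/2) * m * Dv⁻¹^2 * u0 * A * B + ((-1 : ℂ)/2) * m * sh⁻¹^2 * u0 * A * B + (-1 : ℂ) * m * al * sn * Dv⁻¹^3 * uy * A * B + (1 : ℂ) * m * al * sh⁻¹ * Dv * Dv⁻¹^2 * ux * A * B + (-1 : ℂ) * m * al * sh⁻¹ * ch * Dv⁻¹^2 * ux * A * B + (1 : ℂ) * m * al^2 * al⁻¹ * sh⁻¹ * Dv * Dv⁻¹^4 * ux * A * B + (-1 : ℂ) * m * al^2 * al⁻¹ * sh⁻¹ * Dv^3 * Dv⁻¹^4 * ux * A * B + (2 : ℂ) * m * al^2 * al⁻¹ * sh⁻¹ * ch * Dv^2 * Dv⁻¹^4 * ux * A * B + (-1 : ℂ) * m * al^2 * al⁻¹ * sh⁻¹ * ch^2 * Dv * Dv⁻¹^4 * ux * A * B + ((-1 : ℂ)/4) * m^2 * Dv⁻¹^2 * u0 * A * B + ((1 : ℂ)/4) * m^2 * sh⁻¹^2 * u0 * A * B) * hch +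
      (((-1 : ℂ)/4) * u0 * A * B + ((1 : ℂ)/4) * sh * sh⁻¹ * u0 * A * B + ((-1 : ℂ)/2) * m * sh * sh⁻¹ * u0 * A * B + (-1 : ℂ) * m * al * ch * sn * Dv⁻¹^2 * uy * A * B + (1 : ℂ) * m * al * sh * Dv * Dv⁻¹^2 * ux * A * B + (-1 : ℂ) * m * al * sh * ch * Dv⁻¹^2 * ux * A * B + ((1 : ℂ)/4) * m^2 * u0 * A * B + ((-1 : ℂ)/2) * m^2 * ch * Dv⁻¹ * u0 * A * B + ((1 : ℂ)/4) * m^2 * sh * sh⁻¹ * u0 * A * B) * hshi +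
      (((-1 : ℂ)/2) * m * Dv * Dv⁻¹ * u0 * A * B + (1 : ℂ) * m * ch * Dv⁻¹ * u0 * A * B + (1 : ℂ) * m * al * ch * sn * Dv⁻¹^2 * uy * A * B + (1 : ℂ) * m * al * sh⁻¹ * Dv⁻¹ * ux * A * B + (-1 : ℂ) * m * al * sh * Dv * Dv⁻¹^2 * ux * A * B + (1 : ℂ) * m * al * sh * ch * Dv⁻¹^2 * ux * A * B + (-1 : ℂ) * m * al^2 * al⁻¹ * sh⁻¹ * Dv⁻¹ * ux * A * B + (-1 : ℂ) * m * al^2 * al⁻¹ * sh⁻¹ * Dv * Dv⁻¹^2 * ux * A * B + (-1 : ℂ) * m * al^2 * al⁻¹ * sh⁻¹ * Dv^2 * Dv⁻¹^3 * ux * A * B + ((-1 : ℂ)/4) * m^2 * u0 * A * B + ((-1 : ℂ)/4) * m^2 * Dv * Dv⁻¹ * u0 * A * B + ((1 : ℂ)/2) * m^2 * ch * Dv⁻¹ * u0 * A * B) * hDi +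
      ((-1 : ℂ) * m * al * sh⁻¹ * Dv⁻¹ * ux * A * B) * hali

noncomputable def Gfun (m : ℂ) (α : ℝ) (u : ℝ → ℝ → ℂ) (t s : ℝ) : ℂ :=
  ((((((m - 1) / 2) * ((Real.sinh t : ℂ) ^ ((m - 1) / 2 - 1)) * ((Real.cosh t : ℂ))) * (((Real.cosh t - Real.cos s : ℝ) : ℂ) ^ (-(m / 2))) + ((Real.sinh t : ℂ) ^ ((m - 1) / 2)) * ((-(m / 2)) * (((Real.cosh t - Real.cos s : ℝ) : ℂ) ^ (-(m / 2) - 1)) * ((Real.sinh t : ℂ))))) * (UF u (phi α t s)) + (((Real.sinh t : ℂ) ^ ((m - 1) / 2)) * (((Real.cosh t - Real.cos s : ℝ) : ℂ) ^ (-(m / 2)))) * ((((α * (1 - Real.cosh t * Real.cos s) / (Real.cosh t - Real.cos s) ^ 2 : ℝ) : ℂ)) * (pxf u (phi α t s)) + (((-(α * Real.sinh t * Real.sin s) / (Real.cosh t - Real.cos s) ^ 2 : ℝ) : ℂ)) * (pyf u (phi α t s))))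

noncomputable def Hfun (m : ℂ) (α : ℝ) (u : ℝ → ℝ → ℂ) (t s : ℝ) : ℂ :=
  ((((0) * (((Real.cosh t - Real.cos s : ℝ) : ℂ) ^ (-(m / 2))) + ((Real.sinh t : ℂ) ^ ((m - 1) / 2)) * ((-(m / 2)) * (((Real.cosh t - Real.cos s : ℝ) : ℂ) ^ (-(m / 2) - 1)) * ((Real.sin s : ℂ))))) * (UF u (phi α t s)) + (((Real.sinh t : ℂ) ^ ((m - 1) / 2)) * (((Real.cosh t - Real.cos s : ℝ) : ℂ) ^ (-(m / 2)))) * ((((-(α * Real.sinh t * Real.sin s) / (Real.cosh t - Real.cos s) ^ 2 : ℝ) : ℂ)) * (pxf u (phi α t s)) + (((α * (Real.cosh t * Real.cos s - 1) / (Real.cosh t - Real.cos s) ^ 2 : ℝ) : ℂ)) * (pyf u (phi α t s))))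

/-- If `u` solves the Weinstein equation `L_m u = 0` on an open subset of the right half-plane,
then in bipolar coordinates the transformed function
`v_m(τ,θ) = sinh^{(m-1)/2}τ (cosh τ - cos θ)^{-m/2} u(τ,θ)` satisfies
`∂²v/∂τ² + ∂²v/∂θ² + coth τ ∂v/∂τ + (1/4 - (m-1)²/(4 sinh²τ)) v = 0`. -/
theorem weinstein_bipolar_transform (m : ℂ) (α : ℝ) (hα : 0 < α)
    (Ω : Set (ℝ × ℝ)) (hΩ : IsOpen Ω) (hΩH : Ω ⊆ {p : ℝ × ℝ | 0 < p.1})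
    (u : ℝ → ℝ → ℂ)
    (hu : ContDiffOn ℝ 2 (fun p : ℝ × ℝ => u p.1 p.2) Ω)
    (hsol : ∀ p ∈ Ω, pdx (pdx u) p.1 p.2 + pdy (pdy u) p.1 p.2
      + (m / (p.1 : ℂ)) * pdx u p.1 p.2 = 0)
    (v : ℝ → ℝ → ℂ)
    (hv : ∀ τ θ : ℝ, v τ θ
      = (Real.sinh τ : ℂ) ^ ((m - 1) / 2) *
          ((Real.cosh τ - Real.cos θ : ℝ) : ℂ) ^ (-(m / 2)) *
          u (α * Real.sinh τ / (Real.cosh τ - Real.cos θ))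
            (α * Real.sin θ / (Real.cosh τ - Real.cos θ)))
    (τ θ : ℝ) (hτ : 0 < τ)
    (hmem : (α * Real.sinh τ / (Real.cosh τ - Real.cos θ),
        α * Real.sin θ / (Real.cosh τ - Real.cos θ)) ∈ Ω) :
    pdx (pdx v) τ θ + pdy (pdy v) τ θ
      + ((Real.cosh τ / Real.sinh τ : ℝ) : ℂ) * pdx v τ θ
      + (1 / 4 - (m - 1) ^ 2 / (4 * (Real.sinh τ : ℂ) ^ 2)) * v τ θ = 0 := by
  have hαne : α ≠ 0 := ne_of_gt hα
  have hshp : 0 < Real.sinh τ := Real.sinh_pos_iff.2 hτ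
  have hdp : 0 < Real.cosh τ - Real.cos θ := wbt_dpos θ hτ
  have hdne : Real.cosh τ - Real.cos θ ≠ 0 := ne_of_gt hdp
  -- the open set in bipolar coordinates
  set W : Set (ℝ × ℝ) := {p : ℝ × ℝ | 0 < p.1} ∩ (fun p : ℝ × ℝ => phi α p.1 p.2) ⁻¹' Ω with hWdef
  have hWopen : IsOpen W := by
    apply ContinuousOn.isOpen_inter_preimage ?_ (isOpen_lt continuous_const continuous_fst) hΩ
    unfold phi
    apply ContinuousOn.prodMk
    · apply ContinuousOn.div
      · fun_prop
      · fun_prop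
      · intro p hp
        exact ne_of_gt (wbt_dpos p.2 hp)
    · apply ContinuousOn.div
      · fun_prop
      · fun_prop
      · intro p hp
        exact ne_of_gt (wbt_dpos p.2 hp)
  have hmemW : ((τ, θ) : ℝ × ℝ) ∈ W := ⟨hτ, hmem⟩
  -- differentiability facts
  have hUdiff : ∀ q ∈ Ω, DifferentiableAt ℝ (UF u) q := fun q hq =>
    (hu.contDiffAt (hΩ.mem_nhds hq)).differentiableAt (by norm_num)
  have hpxd : ∀ q ∈ Ω, DifferentiableAt ℝ (pxf u) q := fun q hq =>
    ((((hu.contDiffAt (hΩ.mem_nhds hq)).fderiv_right (m := 1) (by norm_num)).clm_apply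
      contDiffAt_const).differentiableAt one_ne_zero : DifferentiableAt ℝ (pxf u) q)
  have hpyd : ∀ q ∈ Ω, DifferentiableAt ℝ (pyf u) q := fun q hq =>
    ((((hu.contDiffAt (hΩ.mem_nhds hq)).fderiv_right (m := 1) (by norm_num)).clm_apply
      contDiffAt_const).differentiableAt one_ne_zero : DifferentiableAt ℝ (pyf u) q)
  have hpdxu : ∀ q ∈ Ω, pdx u q.1 q.2 = pxf u q := fun q hq =>
    (wbt_slice1 (hUdiff q hq).hasFDerivAt).deriv
  have hpdyu : ∀ q ∈ Ω, pdy u q.1 q.2 = pyf u q := fun q hq =>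
    (wbt_slice2 (hUdiff q hq).hasFDerivAt).deriv
  -- second derivatives of u at the base point
  have hax : pdx (pdx u) (α * Real.sinh τ / (Real.cosh τ - Real.cos θ))
      (α * Real.sin θ / (Real.cosh τ - Real.cos θ))
      = fderiv ℝ (pxf u) (phi α τ θ) (1, 0) := by
    have hev : ∀ᶠ x in nhds (α * Real.sinh τ / (Real.cosh τ - Real.cos θ)),
        ((x, α * Real.sin θ / (Real.cosh τ - Real.cos θ)) : ℝ × ℝ) ∈ Ω :=
      (Continuous.continuousAt (by fun_prop :
        Continuous fun x : ℝ => ((x, α * Real.sin θ / (Real.cosh τ - Real.cos θ)) : ℝ × ℝ))).preimage_mem_nhds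
        (hΩ.mem_nhds hmem)
    have heq : (fun x => pdx u x (α * Real.sin θ / (Real.cosh τ - Real.cos θ)))
        =ᶠ[nhds (α * Real.sinh τ / (Real.cosh τ - Real.cos θ))]
        fun x => pxf u (x, α * Real.sin θ / (Real.cosh τ - Real.cos θ)) := by
      filter_upwards [hev] with x hx
      exact hpdxu (x, α * Real.sin θ / (Real.cosh τ - Real.cos θ)) hx
    exact heq.deriv_eq.trans (wbt_slice1 ((hpxd (phi α τ θ) hmem).hasFDerivAt)).deriv
  have hay : pdy (pdy u) (α * Real.sinh τ / (Real.cosh τ - Real.cos θ))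
      (α * Real.sin θ / (Real.cosh τ - Real.cos θ))
      = fderiv ℝ (pyf u) (phi α τ θ) (0, 1) := by
    have hev : ∀ᶠ y in nhds (α * Real.sin θ / (Real.cosh τ - Real.cos θ)),
        ((α * Real.sinh τ / (Real.cosh τ - Real.cos θ), y) : ℝ × ℝ) ∈ Ω :=
      (Continuous.continuousAt (by fun_prop :
        Continuous fun y : ℝ => ((α * Real.sinh τ / (Real.cosh τ - Real.cos θ), y) : ℝ × ℝ))).preimage_mem_nhds
        (hΩ.mem_nhds hmem)
    have heq : (fun y => pdy u (α * Real.sinh τ / (Real.cosh τ - Real.cos θ)) y)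
        =ᶠ[nhds (α * Real.sin θ / (Real.cosh τ - Real.cos θ))]
        fun y => pyf u (α * Real.sinh τ / (Real.cosh τ - Real.cos θ), y) := by
      filter_upwards [hev] with y hy
      exact hpdyu (α * Real.sinh τ / (Real.cosh τ - Real.cos θ), y) hy
    exact heq.deriv_eq.trans (wbt_slice2 ((hpyd (phi α τ θ) hmem).hasFDerivAt)).deriv
  -- the Weinstein equation at the base point
  have hsolF : (fderiv ℝ (pxf u) (phi α τ θ) (1, 0)) + (fderiv ℝ (pyf u) (phi α τ θ) (0, 1))
      + m * ((Real.cosh τ : ℂ) - (Real.cos θ : ℂ)) / ((α : ℂ) * (Real.sinh τ : ℂ)) * (pxf u (phi α τ θ)) = 0 := by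
    have h0 : pdx (pdx u) (α * Real.sinh τ / (Real.cosh τ - Real.cos θ))
          (α * Real.sin θ / (Real.cosh τ - Real.cos θ))
        + pdy (pdy u) (α * Real.sinh τ / (Real.cosh τ - Real.cos θ))
          (α * Real.sin θ / (Real.cosh τ - Real.cos θ))
        + (m / ((α * Real.sinh τ / (Real.cosh τ - Real.cos θ) : ℝ) : ℂ))
          * pdx u (α * Real.sinh τ / (Real.cosh τ - Real.cos θ))
            (α * Real.sin θ / (Real.cosh τ - Real.cos θ)) = 0 :=
      hsol (α * Real.sinh τ / (Real.cosh τ - Real.cos θ),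
        α * Real.sin θ / (Real.cosh τ - Real.cos θ)) hmem
    have hux0 : pdx u (α * Real.sinh τ / (Real.cosh τ - Real.cos θ))
        (α * Real.sin θ / (Real.cosh τ - Real.cos θ)) = pxf u (phi α τ θ) :=
      hpdxu (α * Real.sinh τ / (Real.cosh τ - Real.cos θ),
        α * Real.sin θ / (Real.cosh τ - Real.cos θ)) hmem
    rw [hax, hay, hux0] at h0
    have hc : ((α * Real.sinh τ / (Real.cosh τ - Real.cos θ) : ℝ) : ℂ)
        = (α : ℂ) * (Real.sinh τ : ℂ) / ((Real.cosh τ : ℂ) - (Real.cos θ : ℂ)) := by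
      push_cast; ring
    rw [hc, div_div_eq_mul_div] at h0
    exact h0
  -- first derivative of v in the first coordinate, on W
  have hvt : ∀ t s : ℝ, (t, s) ∈ W → HasDerivAt (fun t' => v t' s) (Gfun m α u t s) t := by
    intro t s hts
    have ht' : 0 < t := hts.1
    have hφ : phi α t s ∈ Ω := hts.2
    have hshp' : 0 < Real.sinh t := Real.sinh_pos_iff.2 ht'
    have hdp' : 0 < Real.cosh t - Real.cos s := wbt_dpos s ht'
    have hdne' : Real.cosh t - Real.cos s ≠ 0 := ne_of_gt hdp'
    have hAd : HasDerivAt (fun t' => (Real.sinh t' : ℂ) ^ ((m - 1) / 2))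
        ((m - 1) / 2 * ((Real.sinh t : ℂ) ^ ((m - 1) / 2 - 1)) * ((Real.cosh t : ℂ))) t :=
      wbt_cpow ((m - 1) / 2) (Real.hasDerivAt_sinh t) hshp'
    have hBd : HasDerivAt (fun t' => ((Real.cosh t' - Real.cos s : ℝ) : ℂ) ^ (-(m / 2)))
        (-(m / 2) * (((Real.cosh t - Real.cos s : ℝ) : ℂ) ^ (-(m / 2) - 1)) * ((Real.sinh t : ℂ))) t :=
      wbt_cpow (-(m / 2)) ((Real.hasDerivAt_cosh t).sub_const (Real.cos s)) hdp'
    have hUd : HasDerivAt (fun t' => UF u (phi α t' s))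
        (((α * (1 - Real.cosh t * Real.cos s) / (Real.cosh t - Real.cos s) ^ 2 : ℝ) : ℂ) * pxf u (phi α t s)
          + ((-(α * Real.sinh t * Real.sin s) / (Real.cosh t - Real.cos s) ^ 2 : ℝ) : ℂ) * pyf u (phi α t s)) t :=
      wbt_chain (hUdiff _ hφ) (wbt_LXt α t s hdne') (wbt_LYt α t s hdne') rfl
    have hfun : (fun t' => v t' s) = fun t' => (Real.sinh t' : ℂ) ^ ((m - 1) / 2) *
        ((Real.cosh t' - Real.cos s : ℝ) : ℂ) ^ (-(m / 2)) * UF u (phi α t' s) :=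
      funext fun t' => hv t' s
    rw [hfun]
    exact (hAd.mul hBd).mul hUd
  -- first derivative of v in the second coordinate, on W
  have hvs : ∀ t s : ℝ, (t, s) ∈ W → HasDerivAt (fun s' => v t s') (Hfun m α u t s) s := by
    intro t s hts
    have ht' : 0 < t := hts.1
    have hφ : phi α t s ∈ Ω := hts.2
    have hdp' : 0 < Real.cosh t - Real.cos s := wbt_dpos s ht'
    have hdne' : Real.cosh t - Real.cos s ≠ 0 := ne_of_gt hdp'
    have hAc : HasDerivAt (fun _ : ℝ => (Real.sinh t : ℂ) ^ ((m - 1) / 2)) 0 s :=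
      hasDerivAt_const s _
    have hb : HasDerivAt (fun s' => Real.cosh t - Real.cos s') (Real.sin s) s := by
      simpa using (Real.hasDerivAt_cos s).const_sub (Real.cosh t)
    have hBd : HasDerivAt (fun s' => ((Real.cosh t - Real.cos s' : ℝ) : ℂ) ^ (-(m / 2)))
        (-(m / 2) * (((Real.cosh t - Real.cos s : ℝ) : ℂ) ^ (-(m / 2) - 1)) * ((Real.sin s : ℝ) : ℂ)) s :=
      wbt_cpow (-(m / 2)) hb hdp'
    have hUd : HasDerivAt (fun s' => UF u (phi α t s'))
        (((-(α * Real.sinh t * Real.sin s) / (Real.cosh t - Real.cos s) ^ 2 : ℝ) : ℂ) * pxf u (phi α t s)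
          + ((α * (Real.cosh t * Real.cos s - 1) / (Real.cosh t - Real.cos s) ^ 2 : ℝ) : ℂ) * pyf u (phi α t s)) s :=
      wbt_chain (hUdiff _ hφ) (wbt_LXs α t s hdne') (wbt_LYs α t s hdne') rfl
    have hfun : (fun s' => v t s') = fun s' => (Real.sinh t : ℂ) ^ ((m - 1) / 2) *
        ((Real.cosh t - Real.cos s' : ℝ) : ℂ) ^ (-(m / 2)) * UF u (phi α t s') :=
      funext fun s' => hv t s'
    rw [hfun]
    exact (hAc.mul hBd).mul hUd
  have h3 : pdx v τ θ = Gfun m α u τ θ := (hvt τ θ hmemW).deriv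
  have h4 : pdy v τ θ = Hfun m α u τ θ := (hvs τ θ hmemW).deriv
  -- second derivative pieces at (τ, θ)
  have hAd : HasDerivAt (fun t' => (Real.sinh t' : ℂ) ^ ((m - 1) / 2))
      ((m - 1) / 2 * ((Real.sinh τ : ℂ) ^ ((m - 1) / 2 - 1)) * ((Real.cosh τ : ℂ))) τ :=
    wbt_cpow ((m - 1) / 2) (Real.hasDerivAt_sinh τ) hshp
  have hA1d : HasDerivAt (fun t' => (Real.sinh t' : ℂ) ^ ((m - 1) / 2 - 1))
      (((m - 1) / 2 - 1) * ((Real.sinh τ : ℂ) ^ ((m - 1) / 2 - 1 - 1)) * ((Real.cosh τ : ℂ))) τ :=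
    wbt_cpow ((m - 1) / 2 - 1) (Real.hasDerivAt_sinh τ) hshp
  have hBd : HasDerivAt (fun t' => ((Real.cosh t' - Real.cos θ : ℝ) : ℂ) ^ (-(m / 2)))
      (-(m / 2) * (((Real.cosh τ - Real.cos θ : ℝ) : ℂ) ^ (-(m / 2) - 1)) * ((Real.sinh τ : ℂ))) τ :=
    wbt_cpow (-(m / 2)) ((Real.hasDerivAt_cosh τ).sub_const (Real.cos θ)) hdp
  have hB1d : HasDerivAt (fun t' => ((Real.cosh t' - Real.cos θ : ℝ) : ℂ) ^ (-(m / 2) - 1))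
      ((-(m / 2) - 1) * (((Real.cosh τ - Real.cos θ : ℝ) : ℂ) ^ (-(m / 2) - 1 - 1)) * ((Real.sinh τ : ℂ))) τ :=
    wbt_cpow (-(m / 2) - 1) ((Real.hasDerivAt_cosh τ).sub_const (Real.cos θ)) hdp
  have hchd : HasDerivAt (fun t' => (Real.cosh t' : ℂ)) ((Real.sinh τ : ℂ)) τ :=
    (Real.hasDerivAt_cosh τ).ofReal_comp
  have hshd : HasDerivAt (fun t' => (Real.sinh t' : ℂ)) ((Real.cosh τ : ℂ)) τ :=
    (Real.hasDerivAt_sinh τ).ofReal_comp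
  have hXtd : HasDerivAt (fun t' => ((α * (1 - Real.cosh t' * Real.cos θ) / (Real.cosh t' - Real.cos θ) ^ 2 : ℝ) : ℂ))
      (((α * Real.sinh τ * (-(Real.cos θ * (Real.cosh τ - Real.cos θ)) - 2 * (1 - Real.cosh τ * Real.cos θ)) / (Real.cosh τ - Real.cos θ) ^ 3 : ℝ) : ℂ)) τ := (wbt_LXtt α τ θ hdne).ofReal_comp
  have hYtd : HasDerivAt (fun t' => ((-(α * Real.sinh t' * Real.sin θ) / (Real.cosh t' - Real.cos θ) ^ 2 : ℝ) : ℂ))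
      (((-(α * Real.sin θ * (Real.cosh τ * (Real.cosh τ - Real.cos θ) - 2 * Real.sinh τ ^ 2)) / (Real.cosh τ - Real.cos θ) ^ 3 : ℝ) : ℂ)) τ := (wbt_LYtt α τ θ hdne).ofReal_comp
  have hUdT : HasDerivAt (fun t' => UF u (phi α t' θ))
      (((α * (1 - Real.cosh τ * Real.cos θ) / (Real.cosh τ - Real.cos θ) ^ 2 : ℝ) : ℂ) * pxf u (phi α τ θ) + ((-(α * Real.sinh τ * Real.sin θ) / (Real.cosh τ - Real.cos θ) ^ 2 : ℝ) : ℂ) * pyf u (phi α τ θ)) τ :=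
    wbt_chain (hUdiff _ hmem) (wbt_LXt α τ θ hdne) (wbt_LYt α τ θ hdne) rfl
  have hPXd : HasDerivAt (fun t' => pxf u (phi α t' θ))
      (((α * (1 - Real.cosh τ * Real.cos θ) / (Real.cosh τ - Real.cos θ) ^ 2 : ℝ) : ℂ) * fderiv ℝ (pxf u) (phi α τ θ) (1, 0) + ((-(α * Real.sinh τ * Real.sin θ) / (Real.cosh τ - Real.cos θ) ^ 2 : ℝ) : ℂ) * fderiv ℝ (pxf u) (phi α τ θ) (0, 1)) τ :=
    wbt_chain (hpxd _ hmem) (wbt_LXt α τ θ hdne) (wbt_LYt α τ θ hdne) rfl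
  have hPYd : HasDerivAt (fun t' => pyf u (phi α t' θ))
      (((α * (1 - Real.cosh τ * Real.cos θ) / (Real.cosh τ - Real.cos θ) ^ 2 : ℝ) : ℂ) * fderiv ℝ (pyf u) (phi α τ θ) (1, 0) + ((-(α * Real.sinh τ * Real.sin θ) / (Real.cosh τ - Real.cos θ) ^ 2 : ℝ) : ℂ) * fderiv ℝ (pyf u) (phi α τ θ) (0, 1)) τ :=
    wbt_chain (hpyd _ hmem) (wbt_LXt α τ θ hdne) (wbt_LYt α τ θ hdne) rfl
  have hWnT : ∀ᶠ t in nhds τ, ((t, θ) : ℝ × ℝ) ∈ W :=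
    (Continuous.continuousAt (by fun_prop : Continuous fun t : ℝ => ((t, θ) : ℝ × ℝ))).preimage_mem_nhds
      (hWopen.mem_nhds hmemW)
  have hevG : (fun t => pdx v t θ) =ᶠ[nhds τ] fun t => Gfun m α u t θ := by
    filter_upwards [hWnT] with t ht
    exact (hvt t θ ht).deriv
  have h1 : pdx (pdx v) τ θ = (((((((((((((m - 1) / 2) * (((m - 1) / 2 - 1) * ((Real.sinh τ : ℂ) ^ ((m - 1) / 2 - 1 - 1)) * ((Real.cosh τ : ℂ))))) * ((Real.cosh τ : ℂ)) + (((m - 1) / 2) * ((Real.sinh τ : ℂ) ^ ((m - 1) / 2 - 1))) * ((Real.sinh τ : ℂ)))) * (((Real.cosh τ - Real.cos θ : ℝ) : ℂ) ^ (-(m / 2))) + ((((m - 1) / 2) * ((Real.sinh τ : ℂ) ^ ((m - 1) / 2 - 1))) * ((Real.cosh τ : ℂ))) * ((-(m / 2)) * (((Real.cosh τ - Real.cos θ : ℝ) : ℂ) ^ (-(m / 2) - 1)) * ((Real.sinh τ : ℂ))))) + (((((m - 1) / 2) * ((Real.sinh τ : ℂ) ^ ((m - 1) / 2 - 1)) *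 ((Real.cosh τ : ℂ))) * (((-(m / 2)) * (((Real.cosh τ - Real.cos θ : ℝ) : ℂ) ^ (-(m / 2) - 1))) * ((Real.sinh τ : ℂ))) + ((Real.sinh τ : ℂ) ^ ((m - 1) / 2)) * (((((-(m / 2)) * ((-(m / 2) - 1) * (((Real.cosh τ - Real.cos θ : ℝ) : ℂ) ^ (-(m / 2) - 1 - 1)) * ((Real.sinh τ : ℂ))))) * ((Real.sinh τ : ℂ)) + ((-(m / 2)) * (((Real.cosh τ - Real.cos θ : ℝ) : ℂ) ^ (-(m / 2) - 1))) * ((Real.cosh τ : ℂ)))))))) * (UF u (phi α τ θ)) + (((((((m - 1) / 2) * ((Real.sinh τ : ℂ) ^ ((m - 1) / 2 - 1))) * ((Real.cosh τ : ℂ))) * (((Real.cosh τ - Real.cos θ : ℝ) : ℂ) ^ (-(m / 2)))) + (((Real.sinh τ : ℂ) ^ ((m - 1) / 2)) * (((-(m / 2)) * (((Real.cosh τ - Real.cos θ : ℝ) : ℂ) ^ (-(m / 2) - 1))) * ((Real.sinh τ : ℂ)))))) * ((((α * (1 - Real.cosh τ * Real.cos θ) / (Real.cosh τ - Real.cos θ)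 ^ 2 : ℝ) : ℂ)) * (pxf u (phi α τ θ)) + (((-(α * Real.sinh τ * Real.sin θ) / (Real.cosh τ - Real.cos θ) ^ 2 : ℝ) : ℂ)) * (pyf u (phi α τ θ))))) + (((((((m - 1) / 2) * ((Real.sinh τ : ℂ) ^ ((m - 1) / 2 - 1)) * ((Real.cosh τ : ℂ))) * (((Real.cosh τ - Real.cos θ : ℝ) : ℂ) ^ (-(m / 2))) + ((Real.sinh τ : ℂ) ^ ((m - 1) / 2)) * ((-(m / 2)) * (((Real.cosh τ - Real.cos θ : ℝ) : ℂ) ^ (-(m / 2) - 1)) * ((Real.sinh τ : ℂ))))) * ((((((α * (1 - Real.cosh τ * Real.cos θ) / (Real.cosh τ - Real.cos θ) ^ 2 : ℝ) : ℂ)) * (pxf u (phi α τ θ))) + ((((-(α * Real.sinh τ * Real.sin θ) / (Real.cosh τ - Real.cos θ) ^ 2 : ℝ) : ℂ)) * (pyf u (phi α τ θ))))) + (((Real.sinh τ : ℂ) ^ ((m - 1) / 2)) * (((Real.cosh τ - Real.cos θ : ℝ) : ℂ) ^ (-(m / 2)))) * (((((((α * Real.sinh τ * (-(Real.cos θ *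 (Real.cosh τ - Real.cos θ)) - 2 * (1 - Real.cosh τ * Real.cos θ)) / (Real.cosh τ - Real.cos θ) ^ 3 : ℝ) : ℂ)) * (pxf u (phi α τ θ)) + (((α * (1 - Real.cosh τ * Real.cos θ) / (Real.cosh τ - Real.cos θ) ^ 2 : ℝ) : ℂ)) * ((((α * (1 - Real.cosh τ * Real.cos θ) / (Real.cosh τ - Real.cos θ) ^ 2 : ℝ) : ℂ)) * (fderiv ℝ (pxf u) (phi α τ θ) (1, 0)) + (((-(α * Real.sinh τ * Real.sin θ) / (Real.cosh τ - Real.cos θ) ^ 2 : ℝ) : ℂ)) * (fderiv ℝ (pxf u) (phi α τ θ) (0, 1))))) + (((((-(α * Real.sin θ * (Real.cosh τ * (Real.cosh τ - Real.cos θ) - 2 * Real.sinh τ ^ 2)) / (Real.cosh τ - Real.cos θ) ^ 3 : ℝ) : ℂ)) * (pyf u (phi α τ θ)) + (((-(α * Real.sinh τ * Real.sin θ) / (Real.cosh τ - Real.cos θ) ^ 2 : ℝ) : ℂ)) * ((((α * (1 - Real.cosh τ * Real.cos θ) / (Real.cosh τ - Real.cos θ) ^ 2 : ℝ) : ℂ))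 * (fderiv ℝ (pyf u) (phi α τ θ) (1, 0)) + (((-(α * Real.sinh τ * Real.sin θ) / (Real.cosh τ - Real.cos θ) ^ 2 : ℝ) : ℂ)) * (fderiv ℝ (pyf u) (phi α τ θ) (0, 1)))))))))) := by
    have e2 : deriv (fun t => Gfun m α u t θ) τ = (((((((((((((m - 1) / 2) * (((m - 1) / 2 - 1) * ((Real.sinh τ : ℂ) ^ ((m - 1) / 2 - 1 - 1)) * ((Real.cosh τ : ℂ))))) * ((Real.cosh τ : ℂ)) + (((m - 1) / 2) * ((Real.sinh τ : ℂ) ^ ((m - 1) / 2 - 1))) * ((Real.sinh τ : ℂ)))) * (((Real.cosh τ - Real.cos θ : ℝ) : ℂ) ^ (-(m / 2))) + ((((m - 1) / 2) * ((Real.sinh τ : ℂ) ^ ((m - 1) / 2 - 1))) * ((Real.cosh τ : ℂ))) * ((-(m / 2)) * (((Real.cosh τ - Real.cos θ : ℝ) : ℂ) ^ (-(m / 2) - 1)) * ((Real.sinh τ : ℂ))))) + (((((m - 1) / 2) * ((Real.sinh τ : ℂ) ^ ((m - 1) / 2 - 1)) * ((Real.cosh τ : ℂ))) * (((-(m / 2))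 * (((Real.cosh τ - Real.cos θ : ℝ) : ℂ) ^ (-(m / 2) - 1))) * ((Real.sinh τ : ℂ))) + ((Real.sinh τ : ℂ) ^ ((m - 1) / 2)) * (((((-(m / 2)) * ((-(m / 2) - 1) * (((Real.cosh τ - Real.cos θ : ℝ) : ℂ) ^ (-(m / 2) - 1 - 1)) * ((Real.sinh τ : ℂ))))) * ((Real.sinh τ : ℂ)) + ((-(m / 2)) * (((Real.cosh τ - Real.cos θ : ℝ) : ℂ) ^ (-(m / 2) - 1))) * ((Real.cosh τ : ℂ)))))))) * (UF u (phi α τ θ)) + (((((((m - 1) / 2) * ((Real.sinh τ : ℂ) ^ ((m - 1) / 2 - 1))) * ((Real.cosh τ : ℂ))) * (((Real.cosh τ - Real.cos θ : ℝ) : ℂ) ^ (-(m / 2)))) + (((Real.sinh τ : ℂ) ^ ((m - 1) / 2)) * (((-(m / 2)) * (((Real.cosh τ - Real.cos θ : ℝ) : ℂ) ^ (-(m / 2) - 1))) * ((Real.sinh τ : ℂ)))))) * ((((α * (1 - Real.cosh τ * Real.cos θ) / (Real.cosh τ - Real.cos θ) ^ 2 : ℝ) : ℂ)) * (pxf u (phi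 α τ θ)) + (((-(α * Real.sinh τ * Real.sin θ) / (Real.cosh τ - Real.cos θ) ^ 2 : ℝ) : ℂ)) * (pyf u (phi α τ θ))))) + (((((((m - 1) / 2) * ((Real.sinh τ : ℂ) ^ ((m - 1) / 2 - 1)) * ((Real.cosh τ : ℂ))) * (((Real.cosh τ - Real.cos θ : ℝ) : ℂ) ^ (-(m / 2))) + ((Real.sinh τ : ℂ) ^ ((m - 1) / 2)) * ((-(m / 2)) * (((Real.cosh τ - Real.cos θ : ℝ) : ℂ) ^ (-(m / 2) - 1)) * ((Real.sinh τ : ℂ))))) * ((((((α * (1 - Real.cosh τ * Real.cos θ) / (Real.cosh τ - Real.cos θ) ^ 2 : ℝ) : ℂ)) * (pxf u (phi α τ θ))) + ((((-(α * Real.sinh τ * Real.sin θ) / (Real.cosh τ - Real.cos θ) ^ 2 : ℝ) : ℂ)) * (pyf u (phi α τ θ))))) + (((Real.sinh τ : ℂ) ^ ((m - 1) / 2)) * (((Real.cosh τ - Real.cos θ : ℝ) : ℂ) ^ (-(m / 2)))) * (((((((α * Real.sinh τ * (-(Real.cos θ * (Real.cosh τ - Real.cos θ)) - 2 * (1 -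 Real.cosh τ * Real.cos θ)) / (Real.cosh τ - Real.cos θ) ^ 3 : ℝ) : ℂ)) * (pxf u (phi α τ θ)) + (((α * (1 - Real.cosh τ * Real.cos θ) / (Real.cosh τ - Real.cos θ) ^ 2 : ℝ) : ℂ)) * ((((α * (1 - Real.cosh τ * Real.cos θ) / (Real.cosh τ - Real.cos θ) ^ 2 : ℝ) : ℂ)) * (fderiv ℝ (pxf u) (phi α τ θ) (1, 0)) + (((-(α * Real.sinh τ * Real.sin θ) / (Real.cosh τ - Real.cos θ) ^ 2 : ℝ) : ℂ)) * (fderiv ℝ (pxf u) (phi α τ θ) (0, 1))))) + (((((-(α * Real.sin θ * (Real.cosh τ * (Real.cosh τ - Real.cos θ) - 2 * Real.sinh τ ^ 2)) / (Real.cosh τ - Real.cos θ) ^ 3 : ℝ) : ℂ)) * (pyf u (phi α τ θ)) + (((-(α * Real.sinh τ * Real.sin θ) / (Real.cosh τ - Real.cos θ) ^ 2 : ℝ) : ℂ)) * ((((α * (1 - Real.cosh τ * Real.cos θ) / (Real.cosh τ - Real.cos θ) ^ 2 : ℝ) : ℂ)) * (fderiv ℝ (pyf u) (phi α τ θ) (1,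 0)) + (((-(α * Real.sinh τ * Real.sin θ) / (Real.cosh τ - Real.cos θ) ^ 2 : ℝ) : ℂ)) * (fderiv ℝ (pyf u) (phi α τ θ) (0, 1)))))))))) :=
      HasDerivAt.deriv
        ((((((hA1d.const_mul ((m - 1) / 2)).mul hchd).mul hBd).add
            (hAd.mul ((hB1d.const_mul (-(m / 2))).mul hshd))).mul hUdT).add
          ((hAd.mul hBd).mul ((hXtd.mul hPXd).add (hYtd.mul hPYd))))
    exact hevG.deriv_eq.trans e2
  -- second derivative in θ
  have hsnd : HasDerivAt (fun s' => ((Real.sin s' : ℝ) : ℂ)) ((Real.cos θ : ℝ) : ℂ) θ :=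
    (Real.hasDerivAt_sin θ).ofReal_comp
  have hbS : HasDerivAt (fun s' => Real.cosh τ - Real.cos s') (Real.sin θ) θ := by
    simpa using (Real.hasDerivAt_cos θ).const_sub (Real.cosh τ)
  have hBdS : HasDerivAt (fun s' => ((Real.cosh τ - Real.cos s' : ℝ) : ℂ) ^ (-(m / 2)))
      (-(m / 2) * (((Real.cosh τ - Real.cos θ : ℝ) : ℂ) ^ (-(m / 2) - 1)) * ((Real.sin θ : ℝ) : ℂ)) θ :=
    wbt_cpow (-(m / 2)) hbS hdp
  have hB1dS : HasDerivAt (fun s' => ((Real.cosh τ - Real.cos s' : ℝ) : ℂ) ^ (-(m / 2) - 1))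
      ((-(m / 2) - 1) * (((Real.cosh τ - Real.cos θ : ℝ) : ℂ) ^ (-(m / 2) - 1 - 1)) * ((Real.sin θ : ℝ) : ℂ)) θ :=
    wbt_cpow (-(m / 2) - 1) hbS hdp
  have hXhd : HasDerivAt (fun s' => ((-(α * Real.sinh τ * Real.sin s') / (Real.cosh τ - Real.cos s') ^ 2 : ℝ) : ℂ))
      (((-(α * Real.sinh τ * (Real.cos θ * (Real.cosh τ - Real.cos θ) - 2 * Real.sin θ ^ 2)) / (Real.cosh τ - Real.cos θ) ^ 3 : ℝ) : ℂ)) θ := (wbt_LXhh α τ θ hdne).ofReal_comp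
  have hYhd : HasDerivAt (fun s' => ((α * (Real.cosh τ * Real.cos s' - 1) / (Real.cosh τ - Real.cos s') ^ 2 : ℝ) : ℂ))
      (((α * Real.sin θ * (-(Real.cosh τ * (Real.cosh τ - Real.cos θ)) - 2 * (Real.cosh τ * Real.cos θ - 1)) / (Real.cosh τ - Real.cos θ) ^ 3 : ℝ) : ℂ)) θ := (wbt_LYhh α τ θ hdne).ofReal_comp
  have hUdS : HasDerivAt (fun s' => UF u (phi α τ s'))
      (((-(α * Real.sinh τ * Real.sin θ) / (Real.cosh τ - Real.cos θ) ^ 2 : ℝ) : ℂ) * pxf u (phi α τ θ) + ((α * (Real.cosh τ * Real.cos θ - 1) / (Real.cosh τ - Real.cos θ) ^ 2 : ℝ) : ℂ) * pyf u (phi α τ θ)) θ :=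
    wbt_chain (hUdiff _ hmem) (wbt_LXs α τ θ hdne) (wbt_LYs α τ θ hdne) rfl
  have hPXdS : HasDerivAt (fun s' => pxf u (phi α τ s'))
      (((-(α * Real.sinh τ * Real.sin θ) / (Real.cosh τ - Real.cos θ) ^ 2 : ℝ) : ℂ) * fderiv ℝ (pxf u) (phi α τ θ) (1, 0) + ((α * (Real.cosh τ * Real.cos θ - 1) / (Real.cosh τ - Real.cos θ) ^ 2 : ℝ) : ℂ) * fderiv ℝ (pxf u) (phi α τ θ) (0, 1)) θ :=
    wbt_chain (hpxd _ hmem) (wbt_LXs α τ θ hdne) (wbt_LYs α τ θ hdne) rfl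
  have hPYdS : HasDerivAt (fun s' => pyf u (phi α τ s'))
      (((-(α * Real.sinh τ * Real.sin θ) / (Real.cosh τ - Real.cos θ) ^ 2 : ℝ) : ℂ) * fderiv ℝ (pyf u) (phi α τ θ) (1, 0) + ((α * (Real.cosh τ * Real.cos θ - 1) / (Real.cosh τ - Real.cos θ) ^ 2 : ℝ) : ℂ) * fderiv ℝ (pyf u) (phi α τ θ) (0, 1)) θ :=
    wbt_chain (hpyd _ hmem) (wbt_LXs α τ θ hdne) (wbt_LYs α τ θ hdne) rfl
  have hWnS : ∀ᶠ s in nhds θ, ((τ, s) : ℝ × ℝ) ∈ W :=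
    (Continuous.continuousAt (by fun_prop : Continuous fun s : ℝ => ((τ, s) : ℝ × ℝ))).preimage_mem_nhds
      (hWopen.mem_nhds hmemW)
  have hevH : (fun s => pdy v τ s) =ᶠ[nhds θ] fun s => Hfun m α u τ s := by
    filter_upwards [hWnS] with s hs
    exact (hvs τ s hs).deriv
  have h2 : pdy (pdy v) τ θ = ((((((((0) * (((Real.cosh τ - Real.cos θ : ℝ) : ℂ) ^ (-(m / 2))) + (0) * ((-(m / 2)) * (((Real.cosh τ - Real.cos θ : ℝ) : ℂ) ^ (-(m / 2) - 1)) * ((Real.sin θ : ℂ))))) + ((((Real.sinh τ : ℂ) ^ ((m - 1) / 2)) * (((((-(m / 2)) * ((-(m / 2) - 1) * (((Real.cosh τ - Real.cos θ : ℝ) : ℂ) ^ (-(m / 2) - 1 - 1)) * ((Real.sin θ : ℂ))))) * ((Real.sin θ : ℂ)) + ((-(m / 2)) * (((Real.cosh τ - Real.cos θ : ℝ) : ℂ) ^ (-(m / 2) - 1))) * ((Real.cos θ : ℂ)))))))) * (UF u (phi α τ θ)) + ((((0) * (((Real.cosh τ - Real.cos θ : ℝ) : ℂ) ^ (-(m /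 2)))) + (((Real.sinh τ : ℂ) ^ ((m - 1) / 2)) * (((-(m / 2)) * (((Real.cosh τ - Real.cos θ : ℝ) : ℂ) ^ (-(m / 2) - 1))) * ((Real.sin θ : ℂ)))))) * ((((-(α * Real.sinh τ * Real.sin θ) / (Real.cosh τ - Real.cos θ) ^ 2 : ℝ) : ℂ)) * (pxf u (phi α τ θ)) + (((α * (Real.cosh τ * Real.cos θ - 1) / (Real.cosh τ - Real.cos θ) ^ 2 : ℝ) : ℂ)) * (pyf u (phi α τ θ))))) + ((((((Real.sinh τ : ℂ) ^ ((m - 1) / 2)) * ((-(m / 2)) * (((Real.cosh τ - Real.cos θ : ℝ) : ℂ) ^ (-(m / 2) - 1)) * ((Real.sin θ : ℂ))))) * ((((((-(α * Real.sinh τ * Real.sin θ) / (Real.cosh τ - Real.cos θ) ^ 2 : ℝ) : ℂ)) * (pxf u (phi α τ θ))) + ((((α * (Real.cosh τ * Real.cos θ - 1) / (Real.cosh τ - Real.cos θ) ^ 2 : ℝ) : ℂ)) * (pyf u (phi α τ θ))))) + (((Real.sinh τ : ℂ) ^ ((m - 1) / 2)) * (((Real.cosh τ - Real.cos θ : ℝ)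 : ℂ) ^ (-(m / 2)))) * (((((((-(α * Real.sinh τ * (Real.cos θ * (Real.cosh τ - Real.cos θ) - 2 * Real.sin θ ^ 2)) / (Real.cosh τ - Real.cos θ) ^ 3 : ℝ) : ℂ)) * (pxf u (phi α τ θ)) + (((-(α * Real.sinh τ * Real.sin θ) / (Real.cosh τ - Real.cos θ) ^ 2 : ℝ) : ℂ)) * ((((-(α * Real.sinh τ * Real.sin θ) / (Real.cosh τ - Real.cos θ) ^ 2 : ℝ) : ℂ)) * (fderiv ℝ (pxf u) (phi α τ θ) (1, 0)) + (((α * (Real.cosh τ * Real.cos θ - 1) / (Real.cosh τ - Real.cos θ) ^ 2 : ℝ) : ℂ)) * (fderiv ℝ (pxf u) (phi α τ θ) (0, 1))))) + (((((α * Real.sin θ * (-(Real.cosh τ * (Real.cosh τ - Real.cos θ)) - 2 * (Real.cosh τ * Real.cos θ - 1)) / (Real.cosh τ - Real.cos θ) ^ 3 : ℝ) : ℂ)) * (pyf u (phi α τ θ)) + (((α * (Real.cosh τ * Real.cos θ - 1) / (Real.cosh τ - Real.cos θ) ^ 2 : ℝ) : ℂ)) * ((((-(α * Real.sinh τ * Real.sin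 θ) / (Real.cosh τ - Real.cos θ) ^ 2 : ℝ) : ℂ)) * (fderiv ℝ (pyf u) (phi α τ θ) (1, 0)) + (((α * (Real.cosh τ * Real.cos θ - 1) / (Real.cosh τ - Real.cos θ) ^ 2 : ℝ) : ℂ)) * (fderiv ℝ (pyf u) (phi α τ θ) (0, 1)))))))))) := by
    have e2 : deriv (fun s => Hfun m α u τ s) θ = ((((((((0) * (((Real.cosh τ - Real.cos θ : ℝ) : ℂ) ^ (-(m / 2))) + (0) * ((-(m / 2)) * (((Real.cosh τ - Real.cos θ : ℝ) : ℂ) ^ (-(m / 2) - 1)) * ((Real.sin θ : ℂ))))) + ((((Real.sinh τ : ℂ) ^ ((m - 1) / 2)) * (((((-(m / 2)) * ((-(m / 2) - 1) * (((Real.cosh τ - Real.cos θ : ℝ) : ℂ) ^ (-(m / 2) - 1 - 1)) * ((Real.sin θ : ℂ))))) * ((Real.sin θ : ℂ)) + ((-(m / 2)) * (((Real.cosh τ - Real.cos θ : ℝ) : ℂ) ^ (-(m / 2) - 1))) * ((Real.cos θ : ℂ)))))))) * (UF u (phi α τ θ)) + ((((0) * (((Real.cosh τ - Real.cos θ : ℝ)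 : ℂ) ^ (-(m / 2)))) + (((Real.sinh τ : ℂ) ^ ((m - 1) / 2)) * (((-(m / 2)) * (((Real.cosh τ - Real.cos θ : ℝ) : ℂ) ^ (-(m / 2) - 1))) * ((Real.sin θ : ℂ)))))) * ((((-(α * Real.sinh τ * Real.sin θ) / (Real.cosh τ - Real.cos θ) ^ 2 : ℝ) : ℂ)) * (pxf u (phi α τ θ)) + (((α * (Real.cosh τ * Real.cos θ - 1) / (Real.cosh τ - Real.cos θ) ^ 2 : ℝ) : ℂ)) * (pyf u (phi α τ θ))))) + ((((((Real.sinh τ : ℂ) ^ ((m - 1) / 2)) * ((-(m / 2)) * (((Real.cosh τ - Real.cos θ : ℝ) : ℂ) ^ (-(m / 2) - 1)) * ((Real.sin θ : ℂ))))) * ((((((-(α * Real.sinh τ * Real.sin θ) / (Real.cosh τ - Real.cos θ) ^ 2 : ℝ) : ℂ)) * (pxf u (phi α τ θ))) + ((((α * (Real.cosh τ * Real.cos θ - 1) / (Real.cosh τ - Real.cos θ) ^ 2 : ℝ) : ℂ)) * (pyf u (phi α τ θ))))) + (((Real.sinh τ : ℂ) ^ ((m - 1) / 2)) * (((Real.cosh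 τ - Real.cos θ : ℝ) : ℂ) ^ (-(m / 2)))) * (((((((-(α * Real.sinh τ * (Real.cos θ * (Real.cosh τ - Real.cos θ) - 2 * Real.sin θ ^ 2)) / (Real.cosh τ - Real.cos θ) ^ 3 : ℝ) : ℂ)) * (pxf u (phi α τ θ)) + (((-(α * Real.sinh τ * Real.sin θ) / (Real.cosh τ - Real.cos θ) ^ 2 : ℝ) : ℂ)) * ((((-(α * Real.sinh τ * Real.sin θ) / (Real.cosh τ - Real.cos θ) ^ 2 : ℝ) : ℂ)) * (fderiv ℝ (pxf u) (phi α τ θ) (1, 0)) + (((α * (Real.cosh τ * Real.cos θ - 1) / (Real.cosh τ - Real.cos θ) ^ 2 : ℝ) : ℂ)) * (fderiv ℝ (pxf u) (phi α τ θ) (0, 1))))) + (((((α * Real.sin θ * (-(Real.cosh τ * (Real.cosh τ - Real.cos θ)) - 2 * (Real.cosh τ * Real.cos θ - 1)) / (Real.cosh τ - Real.cos θ) ^ 3 : ℝ) : ℂ)) * (pyf u (phi α τ θ)) + (((α * (Real.cosh τ * Real.cos θ - 1) / (Real.cosh τ - Real.cos θ) ^ 2 : ℝ) : ℂ)) * ((((-(α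 * Real.sinh τ * Real.sin θ) / (Real.cosh τ - Real.cos θ) ^ 2 : ℝ) : ℂ)) * (fderiv ℝ (pyf u) (phi α τ θ) (1, 0)) + (((α * (Real.cosh τ * Real.cos θ - 1) / (Real.cosh τ - Real.cos θ) ^ 2 : ℝ) : ℂ)) * (fderiv ℝ (pyf u) (phi α τ θ) (0, 1)))))))))) :=
      HasDerivAt.deriv
        (((((hasDerivAt_const θ (0 : ℂ)).mul hBdS).add
            ((( hB1dS.const_mul (-(m / 2))).mul hsnd).const_mul ((Real.sinh τ : ℂ) ^ ((m - 1) / 2)))).mul hUdS).add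
          ((hBdS.const_mul ((Real.sinh τ : ℂ) ^ ((m - 1) / 2))).mul
            ((hXhd.mul hPXdS).add (hYhd.mul hPYdS))))
    exact hevH.deriv_eq.trans e2
  -- cast facts for the key algebraic identity
  have hshC : (Real.sinh τ : ℂ) ≠ 0 := Complex.ofReal_ne_zero.2 (ne_of_gt hshp)
  have hDvC : ((Real.cosh τ : ℂ) - (Real.cos θ : ℂ)) ≠ 0 := by
    have h := Complex.ofReal_ne_zero.2 hdne
    rwa [Complex.ofReal_sub] at h
  have halC : (α : ℂ) ≠ 0 := Complex.ofReal_ne_zero.2 hαne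
  have hBneC : ((Real.cosh τ - Real.cos θ : ℝ) : ℂ) ≠ 0 := Complex.ofReal_ne_zero.2 hdne
  have hchC : (Real.cosh τ : ℂ) ^ 2 = (Real.sinh τ : ℂ) ^ 2 + 1 := by
    have h := Real.cosh_sq_sub_sinh_sq τ
    norm_cast
    linarith
  have hsnC : (Real.sin θ : ℂ) ^ 2 + (Real.cos θ : ℂ) ^ 2 = 1 := by
    norm_cast
    exact Real.sin_sq_add_cos_sq θ
  have hA1C : ((Real.sinh τ : ℂ) ^ ((m - 1) / 2 - 1)) = ((Real.sinh τ : ℂ) ^ ((m - 1) / 2)) / (Real.sinh τ : ℂ) := by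
    rw [Complex.cpow_sub _ _ hshC, Complex.cpow_one]
  have hA2C : ((Real.sinh τ : ℂ) ^ ((m - 1) / 2 - 1 - 1)) = ((Real.sinh τ : ℂ) ^ ((m - 1) / 2)) / (Real.sinh τ : ℂ) ^ 2 := by
    rw [Complex.cpow_sub _ _ hshC, Complex.cpow_sub _ _ hshC, Complex.cpow_one, div_div, ← pow_two]
  have hB1C : (((Real.cosh τ - Real.cos θ : ℝ) : ℂ) ^ (-(m / 2) - 1))
      = (((Real.cosh τ - Real.cos θ : ℝ) : ℂ) ^ (-(m / 2))) / ((Real.cosh τ : ℂ) - (Real.cos θ : ℂ)) := by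
    rw [Complex.cpow_sub _ _ hBneC, Complex.cpow_one]
    congr 1
    push_cast
    ring
  have hB2C : (((Real.cosh τ - Real.cos θ : ℝ) : ℂ) ^ (-(m / 2) - 1 - 1))
      = (((Real.cosh τ - Real.cos θ : ℝ) : ℂ) ^ (-(m / 2))) / ((Real.cosh τ : ℂ) - (Real.cos θ : ℂ)) ^ 2 := by
    rw [Complex.cpow_sub _ _ hBneC, Complex.cpow_sub _ _ hBneC, Complex.cpow_one, div_div]
    congr 1
    push_cast
    ring
  have hXtC : ((α * (1 - Real.cosh τ * Real.cos θ) / (Real.cosh τ - Real.cos θ) ^ 2 : ℝ) : ℂ) = (α : ℂ) * (1 - (Real.cosh τ : ℂ) * (Real.cos θ : ℂ)) / ((Real.cosh τ : ℂ) - (Real.cos θ : ℂ)) ^ 2 := by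
    push_cast; ring
  have hYtC : ((-(α * Real.sinh τ * Real.sin θ) / (Real.cosh τ - Real.cos θ) ^ 2 : ℝ) : ℂ) = -((α : ℂ) * (Real.sinh τ : ℂ) * (Real.sin θ : ℂ)) / ((Real.cosh τ : ℂ) - (Real.cos θ : ℂ)) ^ 2 := by
    push_cast; ring
  have hXhC : ((-(α * Real.sinh τ * Real.sin θ) / (Real.cosh τ - Real.cos θ) ^ 2 : ℝ) : ℂ) = -((α : ℂ) * (Real.sinh τ : ℂ) * (Real.sin θ : ℂ)) / ((Real.cosh τ : ℂ) - (Real.cos θ : ℂ)) ^ 2 := by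
    push_cast; ring
  have hYhC : ((α * (Real.cosh τ * Real.cos θ - 1) / (Real.cosh τ - Real.cos θ) ^ 2 : ℝ) : ℂ) = (α : ℂ) * ((Real.cosh τ : ℂ) * (Real.cos θ : ℂ) - 1) / ((Real.cosh τ : ℂ) - (Real.cos θ : ℂ)) ^ 2 := by
    push_cast; ring
  have hXttC : ((α * Real.sinh τ * (-(Real.cos θ * (Real.cosh τ - Real.cos θ)) - 2 * (1 - Real.cosh τ * Real.cos θ)) / (Real.cosh τ - Real.cos θ) ^ 3 : ℝ) : ℂ) = (α : ℂ) * (Real.sinh τ : ℂ) * (-((Real.cos θ : ℂ) * ((Real.cosh τ : ℂ) - (Real.cos θ : ℂ))) - 2 * (1 - (Real.cosh τ : ℂ) * (Real.cos θ : ℂ))) / ((Real.cosh τ : ℂ) - (Real.cos θ : ℂ)) ^ 3 := by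
    push_cast; ring
  have hYttC : ((-(α * Real.sin θ * (Real.cosh τ * (Real.cosh τ - Real.cos θ) - 2 * Real.sinh τ ^ 2)) / (Real.cosh τ - Real.cos θ) ^ 3 : ℝ) : ℂ) = -((α : ℂ) * (Real.sin θ : ℂ) * ((Real.cosh τ : ℂ) * ((Real.cosh τ : ℂ) - (Real.cos θ : ℂ)) - 2 * (Real.sinh τ : ℂ) ^ 2)) / ((Real.cosh τ : ℂ) - (Real.cos θ : ℂ)) ^ 3 := by
    push_cast; ring
  have hXhhC : ((-(α * Real.sinh τ * (Real.cos θ * (Real.cosh τ - Real.cos θ) - 2 * Real.sin θ ^ 2)) / (Real.cosh τ - Real.cos θ) ^ 3 : ℝ) : ℂ) = -((α : ℂ) * (Real.sinh τ : ℂ) * ((Real.cos θ : ℂ) * ((Real.cosh τ : ℂ) - (Real.cos θ : ℂ)) - 2 * (Real.sin θ : ℂ) ^ 2)) / ((Real.cosh τ : ℂ) - (Real.cos θ : ℂ)) ^ 3 := by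
    push_cast; ring
  have hYhhC : ((α * Real.sin θ * (-(Real.cosh τ * (Real.cosh τ - Real.cos θ)) - 2 * (Real.cosh τ * Real.cos θ - 1)) / (Real.cosh τ - Real.cos θ) ^ 3 : ℝ) : ℂ) = (α : ℂ) * (Real.sin θ : ℂ) * (-((Real.cosh τ : ℂ) * ((Real.cosh τ : ℂ) - (Real.cos θ : ℂ))) - 2 * ((Real.cosh τ : ℂ) * (Real.cos θ : ℂ) - 1)) / ((Real.cosh τ : ℂ) - (Real.cos θ : ℂ)) ^ 3 := by
    push_cast; ring
  rw [Complex.ofReal_div, h1, h2, h3, hv τ θ]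
  exact wbt_key m (α : ℂ) (Real.sinh τ : ℂ) (Real.cosh τ : ℂ) (Real.cos θ : ℂ) (Real.sin θ : ℂ) ((Real.cosh τ : ℂ) - (Real.cos θ : ℂ)) (UF u (phi α τ θ)) (pxf u (phi α τ θ)) (pyf u (phi α τ θ)) (fderiv ℝ (pxf u) (phi α τ θ) (1, 0)) (fderiv ℝ (pxf u) (phi α τ θ) (0, 1)) (fderiv ℝ (pyf u) (phi α τ θ) (1, 0)) (fderiv ℝ (pyf u) (phi α τ θ) (0, 1)) ((Real.sinh τ : ℂ) ^ ((m - 1) / 2)) ((Real.sinh τ : ℂ) ^ ((m - 1) / 2 - 1)) ((Real.sinh τ : ℂ) ^ ((m - 1) / 2 - 1 - 1)) (((Real.cosh τ - Real.cos θ : ℝ) : ℂ) ^ (-(m / 2))) (((Real.cosh τ - Real.cos θ : ℝ) : ℂ) ^ (-(m / 2) - 1)) (((Real.cosh τ - Real.cos θ : ℝ) : ℂ) ^ (-(m / 2) - 1 - 1)) ((α * (1 - Real.cosh τ * Real.cos θ) / (Real.cosh τ - Real.cos θ) ^ 2 : ℝ) : ℂ) ((-(α * Real.sinh τ * Real.sin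 θ) / (Real.cosh τ - Real.cos θ) ^ 2 : ℝ) : ℂ) ((-(α * Real.sinh τ * Real.sin θ) / (Real.cosh τ - Real.cos θ) ^ 2 : ℝ) : ℂ) ((α * (Real.cosh τ * Real.cos θ - 1) / (Real.cosh τ - Real.cos θ) ^ 2 : ℝ) : ℂ) ((α * Real.sinh τ * (-(Real.cos θ * (Real.cosh τ - Real.cos θ)) - 2 * (1 - Real.cosh τ * Real.cos θ)) / (Real.cosh τ - Real.cos θ) ^ 3 : ℝ) : ℂ) ((-(α * Real.sin θ * (Real.cosh τ * (Real.cosh τ - Real.cos θ) - 2 * Real.sinh τ ^ 2)) / (Real.cosh τ - Real.cos θ) ^ 3 : ℝ) : ℂ) ((-(α * Real.sinh τ * (Real.cos θ * (Real.cosh τ - Real.cos θ) - 2 * Real.sin θ ^ 2)) / (Real.cosh τ - Real.cos θ) ^ 3 : ℝ) : ℂ) ((α * Real.sin θ * (-(Real.cosh τ * (Real.cosh τ - Real.cos θ)) - 2 * (Real.cosh τ * Real.cos θ - 1)) / (Real.cosh τ - Real.cos θ) ^ 3 : ℝ) : ℂ) hshC hDvC halC rfl hchC hsnC hA1C hA2C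 hB1C hB2C hXtC hYtC hXhC hYhC hXttC hYttC hXhhC hYhhC hsolF
end
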